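/- arXiv:1402.0636 — 5 statements merged into one kernel-verified Lean document; each statement's English description precedes it below -/
import Mathlib

section
/- Let N ≥ 0 be an integer. Then (2x·e^{−2x}/π)·G_N(x) → 1 as x → ∞. -/
open Real MeasureTheory Filter Set Topology

/-- Modified Bessel function of the first kind of integer order `N`. -/
noncomputable def besselI (N : ℕ) (x : ℝ) : ℝ :=
  ∑' n : ℕ, (x / 2) ^ (2 * n + N) / ((Nat.factorial n : ℝ) * (Nat.factorial (n + N) : ℝ))

/-- Modified Bessel function of the second kind of integer order `N`. -/
noncomputable def besselK (N : ℕ) (x : ℝ) : ℝ :=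
  ∫ s in Ioi (0 : ℝ), Real.exp (-x * Real.cosh s) * Real.cosh (N * s)

/-- `G_N(x) = K_N(x)^2 + π^2 I_N(x)^2`. -/
noncomputable def G (N : ℕ) (x : ℝ) : ℝ :=
  besselK N x ^ 2 + Real.pi ^ 2 * besselI N x ^ 2

lemma int_cos_int (m : ℤ) : ∫ θ in (0:ℝ)..π, Real.cos (m * θ) = if m = 0 then π else 0 := by
  rcases eq_or_ne m 0 with h | h
  · simp [h, Real.pi_pos.le]
  · rw [if_neg h]
    have hm : (m : ℝ) ≠ 0 := Int.cast_ne_zero.mpr h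
    have := intervalIntegral.integral_comp_mul_left (fun θ => Real.cos θ) hm (a := 0) (b := π)
    rw [this]
    simp [Real.sin_int_mul_pi]

lemma cos_mul_cos (a b : ℝ) : Real.cos a * Real.cos b = (Real.cos (a + b) + Real.cos (a - b)) / 2 := by
  rw [Real.cos_add, Real.cos_sub]; ring

lemma int_cos_cos (m : ℤ) (n : ℕ) :
    ∫ θ in (0:ℝ)..π, Real.cos (m * θ) * Real.cos (n * θ)
      = (π / 2) * ((if m = n then 1 else 0) + (if m = -(n:ℤ) then 1 else 0)) := by
  have h1 : ∀ θ : ℝ, Real.cos (m * θ) * Real.cos (n * θ)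
      = (Real.cos (((m + n : ℤ)) * θ) + Real.cos (((m - n : ℤ)) * θ)) / 2 := by
    intro θ
    push_cast
    rw [cos_mul_cos]
    ring_nf
  simp_rw [h1]
  rw [intervalIntegral.integral_div, intervalIntegral.integral_add]
  · rw [int_cos_int, int_cos_int]
    have : (m + n = 0) = (m = -(n:ℤ)) := by
      simp [eq_comm, add_eq_zero_iff_eq_neg]
    have h2 : (m - n = 0) = (m = (n:ℤ)) := by simp [sub_eq_zero]
    rcases eq_or_ne m (-(n:ℤ)) with h|h <;> rcases eq_or_ne m (n:ℤ) with h'|h' <;>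
      simp [h, h', sub_eq_zero, add_eq_zero_iff_eq_neg] <;> split_ifs <;> first | ring1 | (exfalso; omega)
  · exact (Real.continuous_cos.comp (continuous_const.mul continuous_id)).intervalIntegrable _ _
  · exact (Real.continuous_cos.comp (continuous_const.mul continuous_id)).intervalIntegrable _ _


noncomputable def c (x : ℝ) (p : ℕ × ℕ) : ℝ :=
  (x / 2) ^ (p.1 + p.2) / ((Nat.factorial p.1 : ℝ) * (Nat.factorial p.2 : ℝ))

lemma summable_abs_c (x : ℝ) : Summable (fun p : ℕ × ℕ => |c x p|) := by
  have h1 : Summable (fun n : ℕ => |x / 2| ^ n / (Nat.factorial n : ℝ)) := by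
    simpa using Real.summable_pow_div_factorial |x/2|
  have := h1.mul_of_nonneg h1 (fun n => by positivity) (fun n => by positivity)
  apply this.congr
  intro p
  simp only [c, abs_div, abs_mul, pow_add, abs_pow]
  rw [Nat.abs_cast, Nat.abs_cast, div_mul_div_comm]
  try rw [pow_add]

lemma summable_c (x : ℝ) : Summable (c x) := (summable_abs_c x).of_abs

-- complex exp series
lemma cexp_tsum (z : ℂ) : Complex.exp z = ∑' n : ℕ, z ^ n / (Nat.factorial n : ℂ) := by
  rw [Complex.exp_eq_exp_ℂ, NormedSpace.exp_eq_tsum_div]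

lemma exp_cos_eq (x θ : ℝ) :
    Real.exp (x * Real.cos θ)
      = ∑' p : ℕ × ℕ, c x p * Real.cos (((p.1 : ℝ) - (p.2 : ℝ)) * θ) := by
  set f : ℕ → ℂ := fun a => ((x : ℂ)/2 * Complex.exp (θ * Complex.I)) ^ a / (Nat.factorial a : ℂ)
  set g : ℕ → ℂ := fun b => ((x : ℂ)/2 * Complex.exp (-(θ * Complex.I))) ^ b / (Nat.factorial b : ℂ)
  have hnf : ∀ (w : ℂ), Summable (fun n : ℕ => ‖w ^ n / (Nat.factorial n : ℂ)‖) := by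
    intro w
    simpa [norm_div, norm_pow] using Real.summable_pow_div_factorial ‖w‖
  have hf : Summable fun a => ‖f a‖ := hnf _
  have hg : Summable fun b => ‖g b‖ := hnf _
  have hprod := tsum_mul_tsum_of_summable_norm hf hg
  have hfs : ∑' a, f a = Complex.exp ((x : ℂ)/2 * Complex.exp (θ * Complex.I)) := (cexp_tsum _).symm
  have hgs : ∑' b, g b = Complex.exp ((x : ℂ)/2 * Complex.exp (-(θ * Complex.I))) := (cexp_tsum _).symm
  rw [hfs, hgs, ← Complex.exp_add] at hprod
  have hexp : (x : ℂ)/2 * Complex.exp (θ * Complex.I) + (x : ℂ)/2 * Complex.exp (-(θ * Complex.I))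
      = (x : ℂ) * Complex.cos θ := by
    rw [Complex.cos]
    ring_nf
  rw [hexp] at hprod
  -- take real parts
  have hre := congrArg Complex.re hprod
  rw [← Complex.ofReal_cos, ← Complex.ofReal_mul, ← Complex.ofReal_exp] at hre
  have hsum : Summable (fun p : ℕ × ℕ => f p.1 * g p.2) := summable_mul_of_summable_norm hf hg
  have hre2 : (∑' p : ℕ × ℕ, f p.1 * g p.2).re = ∑' p : ℕ × ℕ, (f p.1 * g p.2).re :=
    Complex.reCLM.map_tsum hsum
  rw [hre2] at hre
  rw [Complex.ofReal_re] at hre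
  rw [hre]
  congr 1
  funext p
  obtain ⟨a, b⟩ := p
  show (f a * g b).re = _
  have : f a * g b = ((c x (a, b) : ℝ) : ℂ) * Complex.exp (((a : ℝ) - b : ℝ) * θ * Complex.I) := by
    simp only [f, g, c]
    rw [mul_pow, mul_pow, ← Complex.exp_nat_mul, ← Complex.exp_nat_mul]
    rw [Complex.ofReal_div, Complex.ofReal_mul]
    push_cast
    rw [show ((a:ℂ) - (b:ℂ)) * (θ:ℂ) * Complex.I = (a:ℂ)*((θ:ℂ)*Complex.I) + (b:ℂ)*(-((θ:ℂ)*Complex.I)) by ring,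
      Complex.exp_add, div_mul_div_comm, pow_add]
    ring
  rw [this, Complex.mul_re]
  have h1 : (Complex.exp (((a:ℝ) - b : ℝ) * θ * Complex.I)).re = Real.cos (((a:ℝ) - b) * θ) := by
    rw [show ((((a:ℝ) - b : ℝ)) * θ * Complex.I) = (((((a:ℝ)-b)*θ : ℝ)) : ℂ) * Complex.I by push_cast; ring]
    rw [Complex.exp_ofReal_mul_I_re]
  rw [h1]
  simp


lemma tsum_if_shift (v : ℕ → ℝ) (k : ℕ) (P : ℕ → Prop) [DecidablePred P]
    (hP : ∀ b, P b ↔ b = k) : ∑' b, (if P b then v b else 0) = v k := by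
  have h : ∀ b, (if P b then v b else 0) = if b = k then v k else 0 := by
    intro b
    by_cases h : P b
    · rw [if_pos h, if_pos ((hP b).1 h), (hP b).1 h]
    · rw [if_neg h, if_neg (fun hb => h ((hP b).2 hb))]
  rw [tsum_congr h, tsum_ite_eq]

lemma c_swap (x : ℝ) (a b : ℕ) : c x (b, a) = c x (a, b) := by
  simp only [c]
  rw [add_comm b a, mul_comm ((Nat.factorial b : ℝ)) ((Nat.factorial a : ℝ))]

lemma summable_ite_c (x : ℝ) (P : ℕ × ℕ → Prop) [DecidablePred P] :
    Summable (fun p : ℕ × ℕ => if P p then c x p else 0) := by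
  apply Summable.of_abs
  apply Summable.of_nonneg_of_le (fun p => abs_nonneg _) _ (summable_abs_c x)
  intro p
  by_cases h : P p <;> simp [h, abs_nonneg]

set_option maxHeartbeats 1000000 in
lemma besselI_integral (N : ℕ) (x : ℝ) :
    ∫ θ in (0:ℝ)..π, Real.exp (x * Real.cos θ) * Real.cos (N * θ) = π * besselI N x := by
  have hpt : ∀ θ : ℝ, Real.exp (x * Real.cos θ) * Real.cos (N * θ)
      = ∑' p : ℕ × ℕ, c x p * Real.cos (((p.1 : ℝ) - p.2) * θ) * Real.cos (N * θ) := by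
    intro θ
    rw [exp_cos_eq, ← tsum_mul_right]
  have hcont : ∀ p : ℕ × ℕ, Continuous (fun θ : ℝ =>
      c x p * Real.cos (((p.1 : ℝ) - p.2) * θ) * Real.cos (N * θ)) := by
    intro p
    continuity
  have h_int : ∀ p : ℕ × ℕ, Integrable (fun θ : ℝ =>
      c x p * Real.cos (((p.1 : ℝ) - p.2) * θ) * Real.cos (N * θ))
      (volume.restrict (Ioc (0:ℝ) π)) := fun p => ((hcont p).integrableOn_Ioc)
  have h_sum : Summable (fun p : ℕ × ℕ => ∫ θ in Ioc (0:ℝ) π,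
      ‖c x p * Real.cos (((p.1 : ℝ) - p.2) * θ) * Real.cos (N * θ)‖) := by
    apply Summable.of_nonneg_of_le
      (fun p => integral_nonneg (fun θ => norm_nonneg _))
      _ ((summable_abs_c x).mul_right π)
    intro p
    have hb : ∀ θ ∈ Ioc (0:ℝ) π,
        ‖c x p * Real.cos (((p.1 : ℝ) - p.2) * θ) * Real.cos (N * θ)‖ ≤ |c x p| := by
      intro θ _
      rw [norm_mul, norm_mul]
      calc ‖c x p‖ * ‖Real.cos (((p.1 : ℝ) - p.2) * θ)‖ * ‖Real.cos (N * θ)‖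
          ≤ ‖c x p‖ * 1 * 1 := by
            gcongr
            · exact Real.abs_cos_le_one _
            · exact Real.abs_cos_le_one _
        _ = |c x p| := by simp
    calc ∫ θ in Ioc (0:ℝ) π, ‖c x p * Real.cos (((p.1 : ℝ) - p.2) * θ) * Real.cos (N * θ)‖
        ≤ ∫ _ in Ioc (0:ℝ) π, |c x p| := by
          apply setIntegral_mono_on (h_int p).norm
            (integrableOn_const measure_Ioc_lt_top.ne) measurableSet_Ioc hb
      _ = |c x p| * π := by
          rw [setIntegral_const, Real.volume_real_Ioc_of_le Real.pi_pos.le, smul_eq_mul, sub_zero]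
          ring
  rw [intervalIntegral.integral_of_le Real.pi_pos.le]
  calc ∫ θ in Ioc (0:ℝ) π, Real.exp (x * Real.cos θ) * Real.cos (N * θ)
      = ∫ θ in Ioc (0:ℝ) π, ∑' p : ℕ × ℕ,
          c x p * Real.cos (((p.1 : ℝ) - p.2) * θ) * Real.cos (N * θ) := by
        exact integral_congr_ae (Filter.Eventually.of_forall (fun θ => hpt θ))
    _ = ∑' p : ℕ × ℕ, ∫ θ in Ioc (0:ℝ) π,
          c x p * Real.cos (((p.1 : ℝ) - p.2) * θ) * Real.cos (N * θ) :=
        (MeasureTheory.integral_tsum_of_summable_integral_norm h_int h_sum).symm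
    _ = ∑' p : ℕ × ℕ, c x p * ((π / 2) *
          ((if ((p.1 : ℤ) - p.2) = (N:ℤ) then (1:ℝ) else 0)
            + (if ((p.1 : ℤ) - p.2) = -(N:ℤ) then (1:ℝ) else 0))) := by
        apply tsum_congr
        intro p
        rw [← intervalIntegral.integral_of_le Real.pi_pos.le]
        have he : ∀ θ : ℝ, c x p * Real.cos (((p.1 : ℝ) - p.2) * θ) * Real.cos (N * θ)
            = c x p * (Real.cos ((((p.1 : ℤ) - p.2 : ℤ) : ℝ) * θ) * Real.cos ((N:ℝ) * θ)) := by
          intro θ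
          push_cast
          ring
        rw [intervalIntegral.integral_congr (fun θ _ => he θ),
          intervalIntegral.integral_const_mul, int_cos_cos]
    _ = π * besselI N x := by
        have hptw : ∀ p : ℕ × ℕ, c x p * ((π / 2) *
            ((if ((p.1 : ℤ) - p.2) = (N:ℤ) then (1:ℝ) else 0)
              + (if ((p.1 : ℤ) - p.2) = -(N:ℤ) then (1:ℝ) else 0)))
            = (π/2) * ((if ((p.1 : ℤ) - p.2) = (N:ℤ) then c x p else 0)
              + (if ((p.1 : ℤ) - p.2) = -(N:ℤ) then c x p else 0)) := by
          intro p
          split_ifs <;> ring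
        rw [tsum_congr hptw, tsum_mul_left, Summable.tsum_add (summable_ite_c x (fun p : ℕ × ℕ => ((p.1 : ℤ) - p.2) = (N:ℤ))) (summable_ite_c x (fun p : ℕ × ℕ => ((p.1 : ℤ) - p.2) = -(N:ℤ)))]
        have hs1 : ∑' p : ℕ × ℕ, (if ((p.1 : ℤ) - p.2) = (N:ℤ) then c x p else 0)
            = besselI N x := by
          have hinner : ∀ b : ℕ, Summable (fun a : ℕ => if ((a : ℤ) - b) = (N:ℤ) then c x (a, b) else 0) := by
            intro b
            have heq : ∀ a : ℕ, (if ((a : ℤ) - b) = (N:ℤ) then c x (a, b) else 0)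
                = if a = b + N then c x (b + N, b) else 0 := by
              intro a
              by_cases h : a = b + N
              · subst h; rw [if_pos (by omega), if_pos rfl]
              · rw [if_neg (by omega), if_neg h]
            exact Summable.congr (hasSum_ite_eq (b+N) (c x (b+N, b))).summable (fun a => (heq a).symm)
          rw [← (Equiv.prodComm ℕ ℕ).tsum_eq]
          have hcomm : ∀ p : ℕ × ℕ, (if ((((Equiv.prodComm ℕ ℕ) p).1 : ℤ) - ((Equiv.prodComm ℕ ℕ) p).2) = (N:ℤ)
              then c x ((Equiv.prodComm ℕ ℕ) p) else 0)
              = (if ((p.2 : ℤ) - p.1) = (N:ℤ) then c x (p.2, p.1) else 0) := fun p => by cases p; rfl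
          rw [tsum_congr hcomm]
          rw [Summable.tsum_prod' ((summable_ite_c x (fun p => ((p.2 : ℤ) - p.1) = (N:ℤ))).congr
              (fun p => by by_cases h : ((p.2 : ℤ) - p.1) = (N:ℤ) <;> simp [h, c_swap x p.1 p.2]))
            (fun b => hinner b)]
          rw [tsum_congr (fun b => tsum_if_shift (fun a => c x (a, b)) (b + N)
            (fun a => ((a : ℤ) - b) = (N:ℤ)) (fun a => by omega))]
          apply tsum_congr
          intro b
          simp only [c, besselI]
          have h2 : b + N + b = 2 * b + N := by omega
          rw [h2]
          ring
        have hs2 : ∑' p : ℕ × ℕ, (if ((p.1 : ℤ) - p.2) = -(N:ℤ) then c x p else 0)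
            = besselI N x := by
          have hinner : ∀ a : ℕ, Summable (fun b : ℕ => if ((a : ℤ) - b) = -(N:ℤ) then c x (a, b) else 0) := by
            intro a
            have heq : ∀ b : ℕ, (if ((a : ℤ) - b) = -(N:ℤ) then c x (a, b) else 0)
                = if b = a + N then c x (a, a + N) else 0 := by
              intro b
              by_cases h : b = a + N
              · subst h; rw [if_pos (by omega), if_pos rfl]
              · rw [if_neg (by omega), if_neg h]
            exact Summable.congr (hasSum_ite_eq (a+N) (c x (a, a+N))).summable (fun b => (heq b).symm)
          rw [Summable.tsum_prod' (summable_ite_c x (fun p : ℕ × ℕ => ((p.1 : ℤ) - p.2) = -(N:ℤ))) hinner]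
          rw [tsum_congr (fun a => tsum_if_shift (fun b => c x (a, b)) (a + N)
            (fun b => ((a : ℤ) - b) = -(N:ℤ)) (fun b => by omega))]
          apply tsum_congr
          intro a
          simp only [c, besselI]
          have h2 : a + (a + N) = 2 * a + N := by omega
          rw [h2]
        rw [hs1, hs2]
        ring

lemma one_sub_cos (u : ℝ) : 1 - Real.cos u = 2 * Real.sin (u / 2) ^ 2 := by
  have h := Real.cos_two_mul (u / 2)
  have h2 : 2 * (u / 2) = u := by ring
  rw [h2] at h
  nlinarith [Real.sin_sq_add_cos_sq (u / 2)]

lemma one_sub_cos_ge {u : ℝ} (h0 : 0 ≤ u) (hπ : u ≤ π) :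
    2 * u ^ 2 / π ^ 2 ≤ 1 - Real.cos u := by
  rw [one_sub_cos]
  have hs : u / π ≤ Real.sin (u / 2) := by
    have := Real.mul_le_sin (x := u / 2) (by linarith) (by linarith)
    calc u / π = 2 / π * (u / 2) := by field_simp
      _ ≤ Real.sin (u / 2) := this
  have hu : 0 ≤ u / π := div_nonneg h0 Real.pi_pos.le
  have h3 : (u / π) ^ 2 ≤ Real.sin (u / 2) ^ 2 := by nlinarith
  rw [div_pow] at h3
  calc 2 * u ^ 2 / π ^ 2 = 2 * (u ^ 2 / π ^ 2) := by ring
    _ ≤ 2 * Real.sin (u / 2) ^ 2 := by linarith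

lemma tendsto_sqrt_atTop' : Tendsto Real.sqrt atTop atTop := by
  refine tendsto_atTop.2 (fun b => ?_)
  filter_upwards [eventually_ge_atTop (b ^ 2)] with x h1
  calc b ≤ |b| := le_abs_self b
    _ = Real.sqrt (b ^ 2) := (Real.sqrt_sq_eq_abs b).symm
    _ ≤ Real.sqrt x := Real.sqrt_le_sqrt h1

lemma tendsto_sin_div : Tendsto (fun u : ℝ => Real.sin u / u) (𝓝[≠] (0:ℝ)) (𝓝 1) := by
  have h := hasDerivAt_iff_tendsto_slope.mp (Real.hasDerivAt_sin 0)
  rw [Real.cos_zero] at h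
  refine h.congr' ?_
  filter_upwards [self_mem_nhdsWithin] with u hu
  simp [slope_def_field, Real.sin_zero]

lemma tendsto_x_one_sub_cos (t : ℝ) (ht : 0 < t) :
    Tendsto (fun x : ℝ => x * (1 - Real.cos (t / Real.sqrt x))) atTop (𝓝 (t ^ 2 / 2)) := by
  have hu : Tendsto (fun x : ℝ => t / (2 * Real.sqrt x)) atTop (𝓝[≠] (0:ℝ)) := by
    rw [tendsto_nhdsWithin_iff]
    constructor
    · have : Tendsto (fun x : ℝ => 2 * Real.sqrt x) atTop atTop :=
        tendsto_sqrt_atTop'.const_mul_atTop two_pos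
      have h9 : Tendsto (fun x : ℝ => t * (2 * Real.sqrt x)⁻¹) atTop (𝓝 (t * 0)) :=
        this.inv_tendsto_atTop.const_mul t
      rw [mul_zero] at h9
      exact h9.congr (fun x => (div_eq_mul_inv t _).symm)
    · filter_upwards [eventually_gt_atTop (0:ℝ)] with x hx
      have : 0 < t / (2 * Real.sqrt x) := by positivity
      exact ne_of_gt this
  have hS : Tendsto (fun x : ℝ => Real.sin (t / (2 * Real.sqrt x)) / (t / (2 * Real.sqrt x)))
      atTop (𝓝 1) := tendsto_sin_div.comp hu
  have hlim : Tendsto (fun x : ℝ => t ^ 2 / 2 *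
      (Real.sin (t / (2 * Real.sqrt x)) / (t / (2 * Real.sqrt x))) ^ 2) atTop (𝓝 (t ^ 2 / 2)) := by
    have := (hS.pow 2).const_mul (t ^ 2 / 2)
    simpa using this
  refine hlim.congr' ?_
  filter_upwards [eventually_gt_atTop (0:ℝ)] with x hx
  have hsx : 0 < Real.sqrt x := Real.sqrt_pos.mpr hx
  have hv : t / (2 * Real.sqrt x) ≠ 0 := by positivity
  rw [one_sub_cos (t / Real.sqrt x)]
  have h2 : t / Real.sqrt x / 2 = t / (2 * Real.sqrt x) := by ring
  rw [h2]
  have hx2 : Real.sqrt x ^ 2 = x := Real.sq_sqrt hx.le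
  have hveq : (t / (2 * Real.sqrt x)) ^ 2 = t ^ 2 / (4 * x) := by
    rw [div_pow, mul_pow, hx2]; norm_num
  rw [div_pow, hveq]
  have hxne : x ≠ 0 := hx.ne'
  have htne : t ≠ 0 := ht.ne'
  field_simp
  ring

lemma key_sub (N : ℕ) {x : ℝ} (hx : 0 < x) :
    Real.sqrt x * Real.exp (-x) * ∫ θ in (0:ℝ)..π, Real.exp (x * Real.cos θ) * Real.cos (N * θ)
      = ∫ t in (0:ℝ)..(π * Real.sqrt x),
          Real.exp (-(x * (1 - Real.cos (t / Real.sqrt x)))) * Real.cos (N * (t / Real.sqrt x)) := by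
  have hs : Real.sqrt x ≠ 0 := ne_of_gt (Real.sqrt_pos.mpr hx)
  rw [intervalIntegral.integral_comp_div
    (fun u => Real.exp (-(x * (1 - Real.cos u))) * Real.cos (N * u)) hs]
  rw [zero_div, mul_div_cancel_right₀ _ hs, smul_eq_mul]
  rw [mul_assoc]
  congr 1
  rw [← intervalIntegral.integral_const_mul]
  apply intervalIntegral.integral_congr
  intro θ _
  show Real.exp (-x) * (Real.exp (x * Real.cos θ) * Real.cos (N * θ))
      = Real.exp (-(x * (1 - Real.cos θ))) * Real.cos (N * θ)
  rw [← mul_assoc, ← Real.exp_add]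
  congr 2
  ring

noncomputable def Ffun (N : ℕ) (x : ℝ) : ℝ → ℝ :=
  Set.indicator (Ioc (0:ℝ) (π * Real.sqrt x))
    (fun t => Real.exp (-(x * (1 - Real.cos (t / Real.sqrt x)))) * Real.cos (N * (t / Real.sqrt x)))

lemma Ffun_bound (N : ℕ) {x : ℝ} (hx : 0 < x) (t : ℝ) :
    ‖Ffun N x t‖ ≤ Real.exp (-(2 / π ^ 2) * t ^ 2) := by
  rw [Ffun]
  by_cases ht : t ∈ Ioc (0:ℝ) (π * Real.sqrt x)
  · rw [Set.indicator_of_mem ht]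
    have hsx : 0 < Real.sqrt x := Real.sqrt_pos.mpr hx
    have hu0 : 0 < t / Real.sqrt x := div_pos ht.1 hsx
    have huπ : t / Real.sqrt x ≤ π := by
      rw [div_le_iff₀ hsx]
      exact ht.2
    have hge := one_sub_cos_ge hu0.le huπ
    have hx2 : Real.sqrt x ^ 2 = x := Real.sq_sqrt hx.le
    have hkey : 2 / π ^ 2 * t ^ 2 ≤ x * (1 - Real.cos (t / Real.sqrt x)) := by
      have h5 : x * (2 * (t / Real.sqrt x) ^ 2 / π ^ 2) ≤ x * (1 - Real.cos (t / Real.sqrt x)) :=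
        mul_le_mul_of_nonneg_left hge hx.le
      calc 2 / π ^ 2 * t ^ 2 = x * (2 * (t / Real.sqrt x) ^ 2 / π ^ 2) := by
            rw [div_pow, hx2]
            field_simp
        _ ≤ x * (1 - Real.cos (t / Real.sqrt x)) := h5
    rw [norm_mul]
    calc ‖Real.exp (-(x * (1 - Real.cos (t / Real.sqrt x))))‖ * ‖Real.cos (N * (t / Real.sqrt x))‖
        ≤ ‖Real.exp (-(x * (1 - Real.cos (t / Real.sqrt x))))‖ * 1 := by
          gcongr
          exact Real.abs_cos_le_one _
      _ ≤ Real.exp (-(2 / π ^ 2) * t ^ 2) := by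
          rw [mul_one, Real.norm_eq_abs, Real.abs_exp]
          apply Real.exp_le_exp.mpr
          linarith
  · rw [Set.indicator_of_notMem ht]
    simp [Real.exp_nonneg]

lemma Ffun_tendsto (N : ℕ) (t : ℝ) :
    Tendsto (fun x : ℝ => Ffun N x t) atTop
      (𝓝 (Set.indicator (Ioi (0:ℝ)) (fun t => Real.exp (-(1/2) * t ^ 2)) t)) := by
  rcases le_or_gt t 0 with ht | ht
  · have hz : ∀ x : ℝ, Ffun N x t = 0 := by
      intro x
      apply Set.indicator_of_notMem
      simp only [mem_Ioc, not_and_or, not_lt]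
      exact Or.inl ht
    rw [Set.indicator_of_notMem (by simpa using ht : t ∉ Ioi (0:ℝ))]
    simp only [hz]
    exact tendsto_const_nhds
  · rw [Set.indicator_of_mem (mem_Ioi.mpr ht)]
    have hA := tendsto_x_one_sub_cos t ht
    have hB : Tendsto (fun x : ℝ => (N:ℝ) * (t / Real.sqrt x)) atTop (𝓝 0) := by
      have h1 : Tendsto (fun x : ℝ => t / Real.sqrt x) atTop (𝓝 0) := by
        have h9 : Tendsto (fun x : ℝ => t * (Real.sqrt x)⁻¹) atTop (𝓝 (t * 0)) :=
          tendsto_sqrt_atTop'.inv_tendsto_atTop.const_mul t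
        rw [mul_zero] at h9
        exact h9.congr (fun x => (div_eq_mul_inv t _).symm)
      simpa using h1.const_mul (N:ℝ)
    have hC : Tendsto (fun x : ℝ => Real.exp (-(x * (1 - Real.cos (t / Real.sqrt x)))))
        atTop (𝓝 (Real.exp (-(t ^ 2 / 2)))) :=
      (Real.continuous_exp.tendsto _).comp hA.neg
    have hD : Tendsto (fun x : ℝ => Real.cos ((N:ℝ) * (t / Real.sqrt x)))
        atTop (𝓝 (Real.cos 0)) := (Real.continuous_cos.tendsto _).comp hB
    have hprod := hC.mul hD
    rw [Real.cos_zero, mul_one] at hprod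
    have heq : Real.exp (-(t ^ 2 / 2)) = Real.exp (-(1/2) * t ^ 2) := by ring_nf
    rw [heq] at hprod
    apply hprod.congr'
    filter_upwards [eventually_ge_atTop ((t / π) ^ 2)] with x hx9
    have hle : t / π ≤ Real.sqrt x := by
      calc t / π ≤ |t / π| := le_abs_self _
        _ = Real.sqrt ((t / π) ^ 2) := (Real.sqrt_sq_eq_abs _).symm
        _ ≤ Real.sqrt x := Real.sqrt_le_sqrt hx9
    have hmem : t ∈ Ioc (0:ℝ) (π * Real.sqrt x) := by
      refine ⟨ht, ?_⟩
      calc t = π * (t / π) := by field_simp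
        _ ≤ π * Real.sqrt x := mul_le_mul_of_nonneg_left hle Real.pi_pos.le
    rw [Ffun, Set.indicator_of_mem hmem]

lemma tendsto_J (N : ℕ) :
    Tendsto (fun x : ℝ => Real.sqrt x * Real.exp (-x) *
      ∫ θ in (0:ℝ)..π, Real.exp (x * Real.cos θ) * Real.cos (N * θ)) atTop
      (𝓝 (Real.sqrt (π / 2))) := by
  have h2 : Tendsto (fun x => ∫ t : ℝ, Ffun N x t) atTop (𝓝 (Real.sqrt (π / 2))) := by
    have hlimval : ∫ t : ℝ, Set.indicator (Ioi (0:ℝ)) (fun t => Real.exp (-(1/2) * t ^ 2)) t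
        = Real.sqrt (π / 2) := by
      rw [MeasureTheory.integral_indicator measurableSet_Ioi, integral_gaussian_Ioi]
      rw [show π / (1/2) = 2 ^ 2 * (π / 2) by ring, Real.sqrt_mul (by positivity),
        Real.sqrt_sq (by norm_num : (0:ℝ) ≤ 2)]
      ring
    rw [← hlimval]
    apply tendsto_integral_filter_of_dominated_convergence
      (bound := fun t : ℝ => Real.exp (-(2 / π ^ 2) * t ^ 2))
    · filter_upwards with x
      apply AEStronglyMeasurable.indicator _ measurableSet_Ioc
      apply Continuous.aestronglyMeasurable
      continuity
    · filter_upwards [eventually_gt_atTop (0:ℝ)] with x hx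
      filter_upwards with t
      exact Ffun_bound N hx t
    · exact integrable_exp_neg_mul_sq (by positivity)
    · filter_upwards with t
      exact Ffun_tendsto N t
  apply h2.congr'
  filter_upwards [eventually_gt_atTop (0:ℝ)] with x hx
  rw [Ffun, MeasureTheory.integral_indicator measurableSet_Ioc, key_sub N hx,
    intervalIntegral.integral_of_le (by positivity : (0:ℝ) ≤ π * Real.sqrt x)]

lemma besselK_nonneg (N : ℕ) (x : ℝ) : 0 ≤ besselK N x := by
  apply MeasureTheory.integral_nonneg
  intro s
  positivity

lemma besselK_le (N : ℕ) {x : ℝ} (hx : 2 * (N:ℝ) + 2 ≤ x) :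
    besselK N x ≤ Real.exp ((N:ℝ) + 1) * Real.exp (-x) := by
  set M : ℝ := 2 * (N:ℝ) + 2 with hM
  have hM0 : 0 ≤ M := by positivity
  have hpt : ∀ s ∈ Ioi (0:ℝ), Real.exp (-x * Real.cosh s) * Real.cosh (N * s)
      ≤ Real.exp ((N:ℝ) + 1 - x) * Real.exp (-s) := by
    intro s hs
    have hs0 : (0:ℝ) < s := hs
    have hch : Real.cosh ((N:ℝ) * s) ≤ Real.exp ((N:ℝ) * s) := by
      rw [Real.cosh_eq]
      have : Real.exp (-((N:ℝ) * s)) ≤ Real.exp ((N:ℝ) * s) :=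
        Real.exp_le_exp.mpr (by nlinarith [Nat.cast_nonneg (α := ℝ) N])
      linarith
    have h1 : 1 ≤ Real.cosh s := Real.one_le_cosh s
    have h2 : (1 + s) / 2 ≤ Real.cosh s := by
      rw [Real.cosh_eq]
      have hp : 0 ≤ Real.exp (-s) := Real.exp_nonneg _
      linarith [Real.add_one_le_exp s]
    have hexp : -x * Real.cosh s + (N:ℝ) * s ≤ (N:ℝ) + 1 - x - s := by
      have p1 : 0 ≤ (x - M) * (Real.cosh s - 1) := mul_nonneg (by linarith) (by linarith)
      have p2 : M * ((1 + s) / 2) ≤ M * Real.cosh s := mul_le_mul_of_nonneg_left h2 hM0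
      nlinarith [p1, p2]
    calc Real.exp (-x * Real.cosh s) * Real.cosh ((N:ℝ) * s)
        ≤ Real.exp (-x * Real.cosh s) * Real.exp ((N:ℝ) * s) := by
          exact mul_le_mul_of_nonneg_left hch (Real.exp_nonneg _)
      _ = Real.exp (-x * Real.cosh s + (N:ℝ) * s) := (Real.exp_add _ _).symm
      _ ≤ Real.exp ((N:ℝ) + 1 - x - s) := Real.exp_le_exp.mpr hexp
      _ = Real.exp ((N:ℝ) + 1 - x) * Real.exp (-s) := by rw [← Real.exp_add]; ring_nf
  have hgint : IntegrableOn (fun s : ℝ => Real.exp ((N:ℝ) + 1 - x) * Real.exp (-s)) (Ioi (0:ℝ)) := by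
    have hb : IntegrableOn (fun s : ℝ => Real.exp (-s)) (Ioi (0:ℝ)) := by
      simpa using exp_neg_integrableOn_Ioi 0 one_pos
    exact hb.const_mul _
  have hle : besselK N x ≤ ∫ s in Ioi (0:ℝ), Real.exp ((N:ℝ) + 1 - x) * Real.exp (-s) := by
    rw [besselK]
    apply MeasureTheory.integral_mono_of_nonneg
    · filter_upwards with s
      positivity
    · exact hgint
    · rw [EventuallyLE, ae_restrict_iff' measurableSet_Ioi]
      filter_upwards with s hs
      exact hpt s hs
  calc besselK N x ≤ ∫ s in Ioi (0:ℝ), Real.exp ((N:ℝ) + 1 - x) * Real.exp (-s) := hle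
    _ = Real.exp ((N:ℝ) + 1 - x) * ∫ s in Ioi (0:ℝ), Real.exp (-s) := MeasureTheory.integral_const_mul _ _
    _ = Real.exp ((N:ℝ) + 1 - x) := by rw [integral_exp_neg_Ioi_zero, mul_one]
    _ = Real.exp ((N:ℝ) + 1) * Real.exp (-x) := by rw [← Real.exp_add]; ring_nf

lemma tendsto_K_part (N : ℕ) :
    Tendsto (fun x : ℝ => 2 * x * Real.exp (-2 * x) / π * besselK N x ^ 2) atTop (𝓝 0) := by
  have h4 : Tendsto (fun x : ℝ => x * Real.exp (-x)) atTop (𝓝 0) := by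
    simpa using tendsto_pow_mul_exp_neg_atTop_nhds_zero 1
  have h5 : Tendsto (fun x : ℝ => 4 * x * Real.exp (-(4 * x))) atTop (𝓝 0) := by
    have hc : Tendsto (fun x : ℝ => 4 * x) atTop atTop :=
      Tendsto.const_mul_atTop four_pos tendsto_id
    have := h4.comp hc
    exact this.congr (fun x => by simp [Function.comp])
  have h6 : Tendsto (fun x : ℝ => (Real.exp (2 * ((N:ℝ) + 1)) / (2 * π)) *
      (4 * x * Real.exp (-(4 * x)))) atTop (𝓝 0) := by
    simpa using h5.const_mul (Real.exp (2 * ((N:ℝ) + 1)) / (2 * π))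
  apply squeeze_zero' _ _ h6
  · filter_upwards [eventually_ge_atTop (0:ℝ)] with x hx
    have := besselK_nonneg N x
    positivity
  · filter_upwards [eventually_ge_atTop (max (2 * (N:ℝ) + 2) 0)] with x hx
    have hx1 : 2 * (N:ℝ) + 2 ≤ x := le_trans (le_max_left _ _) hx
    have hx0 : (0:ℝ) ≤ x := le_trans (le_max_right _ _) hx
    have hK := besselK_le N hx1
    have hKn := besselK_nonneg N x
    have hsq : besselK N x ^ 2 ≤ (Real.exp ((N:ℝ) + 1) * Real.exp (-x)) ^ 2 :=
      pow_le_pow_left₀ hKn hK 2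
    have hstep : 2 * x * Real.exp (-2 * x) / π * besselK N x ^ 2
        ≤ 2 * x * Real.exp (-2 * x) / π * (Real.exp ((N:ℝ) + 1) * Real.exp (-x)) ^ 2 := by
      apply mul_le_mul_of_nonneg_left hsq
      positivity
    refine hstep.trans (le_of_eq ?_)
    have e1 : Real.exp ((N:ℝ) + 1) ^ 2 = Real.exp (2 * ((N:ℝ) + 1)) := by
      rw [← Real.exp_nat_mul]; norm_num
    have e2 : Real.exp (-2 * x) * Real.exp (-x) ^ 2 = Real.exp (-(4 * x)) := by
      rw [← Real.exp_nat_mul, ← Real.exp_add]; ring_nf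
    rw [mul_pow, e1]
    rw [show 2 * x * Real.exp (-2 * x) / π * (Real.exp (2 * ((N:ℝ) + 1)) * Real.exp (-x) ^ 2)
        = Real.exp (2 * ((N:ℝ) + 1)) / (2 * π) * (4 * x * (Real.exp (-2 * x) * Real.exp (-x) ^ 2)) by
      field_simp
      ring]
    rw [e2]


theorem G_asymptotic_at_top (N : ℕ) :
    Tendsto (fun x : ℝ => 2 * x * Real.exp (-2 * x) / Real.pi * G N x) atTop (𝓝 1) := by
  have hπ : (π:ℝ) ≠ 0 := Real.pi_ne_zero
  have hI : Tendsto (fun x : ℝ => 2 * π * x * Real.exp (-2 * x) * besselI N x ^ 2) atTop (𝓝 1) := by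
    have hJ2 := (tendsto_J N).mul (tendsto_J N)
    rw [Real.mul_self_sqrt (by positivity : (0:ℝ) ≤ π / 2)] at hJ2
    have hJ3 := hJ2.const_mul (2 / π)
    rw [show 2 / π * (π / 2) = 1 by field_simp] at hJ3
    apply hJ3.congr'
    filter_upwards [eventually_ge_atTop (0:ℝ)] with x hx
    rw [besselI_integral]
    have h1 : Real.sqrt x * Real.exp (-x) * (π * besselI N x) *
        (Real.sqrt x * Real.exp (-x) * (π * besselI N x))
        = Real.sqrt x * Real.sqrt x * (Real.exp (-x) * Real.exp (-x)) * π ^ 2 * besselI N x ^ 2 := by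
      ring
    have h2 : Real.exp (-x) * Real.exp (-x) = Real.exp (-2 * x) := by
      rw [← Real.exp_add]; ring_nf
    rw [h1, Real.mul_self_sqrt hx, h2]
    field_simp
  have hsum := (tendsto_K_part N).add hI
  rw [zero_add] at hsum
  apply hsum.congr
  intro x
  rw [G]
  field_simp
end

section
/- Let N ≥ 0 be an integer. Then for every real number p, the function y ↦ 1/(y^p·G_N(y)) is integrable on [1, ∞). -/
open Real MeasureTheory Filter Set Topology

lemma besselI_summable (N : ℕ) (x : ℝ) :
    Summable (fun n : ℕ =>
      (x / 2) ^ (2 * n + N) / ((Nat.factorial n : ℝ) * (Nat.factorial (n + N) : ℝ))) := by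
  apply Summable.of_norm
  have hsum : Summable (fun n : ℕ => (|x| / 2) ^ N * (((|x| / 2) ^ 2) ^ n / n.factorial)) :=
    (Real.summable_pow_div_factorial ((|x| / 2) ^ 2)).mul_left _
  apply Summable.of_nonneg_of_le (fun n => norm_nonneg _) _ hsum
  intro n
  have h1 : ‖(x / 2) ^ (2 * n + N) / ((Nat.factorial n : ℝ) * (Nat.factorial (n + N) : ℝ))‖
      = (|x| / 2) ^ (2 * n + N) / ((Nat.factorial n : ℝ) * (Nat.factorial (n + N) : ℝ)) := by
    rw [norm_div, norm_pow, norm_eq_abs, norm_eq_abs, abs_div, abs_two,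
      abs_of_nonneg (by positivity : (0:ℝ) ≤ (Nat.factorial n : ℝ) * (Nat.factorial (n + N) : ℝ))]
  rw [h1]
  have h2 : (|x| / 2) ^ (2 * n + N) = (|x| / 2) ^ N * ((|x| / 2) ^ 2) ^ n := by
    rw [pow_add, pow_mul, mul_comm]
  rw [h2, mul_div_assoc]
  have h1n : (1:ℝ) ≤ (Nat.factorial (n + N) : ℝ) := by
    exact_mod_cast Nat.one_le_iff_ne_zero.mpr (Nat.factorial_ne_zero _)
  have hfpos : (0:ℝ) < (Nat.factorial n : ℝ) := by exact_mod_cast Nat.factorial_pos n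
  have hfac : (Nat.factorial n : ℝ) ≤ (Nat.factorial n : ℝ) * (Nat.factorial (n + N) : ℝ) := by
    nlinarith
  gcongr
  all_goals first | positivity | exact hfac | exact_mod_cast Nat.factorial_pos n

lemma besselI_measurable (N : ℕ) : Measurable (besselI N) := by
  apply measurable_of_tendsto_metrizable
    (f := fun k x => ∑ n ∈ Finset.range k,
      (x / 2) ^ (2 * n + N) / ((Nat.factorial n : ℝ) * (Nat.factorial (n + N) : ℝ)))
  · intro k
    apply Finset.measurable_sum
    intro n _
    exact (((measurable_id.div_const 2).pow_const _).div_const _)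
  · rw [tendsto_pi_nhds]
    intro x
    exact (besselI_summable N x).hasSum.tendsto_sum_nat

lemma besselK_measurable (N : ℕ) : Measurable (besselK N) := by
  have h : StronglyMeasurable fun q : ℝ × ℝ =>
      Real.exp (-q.1 * Real.cosh q.2) * Real.cosh (N * q.2) := by
    apply Continuous.stronglyMeasurable
    continuity
  exact h.integral_prod_right'.measurable

lemma besselI_lower (N m : ℕ) (x : ℝ) (hx : 0 ≤ x) :
    (x / 2) ^ (2 * m + N) / ((Nat.factorial m : ℝ) * (Nat.factorial (m + N) : ℝ))
      ≤ besselI N x := by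
  apply Summable.le_tsum (besselI_summable N x) m
  intro n _
  positivity

theorem integrable_inv_rpow_mul_G_Ici_one (N : ℕ) (p : ℝ) :
    IntegrableOn (fun y : ℝ => 1 / (y ^ p * G N y)) (Ici (1 : ℝ)) := by
  obtain ⟨m, hm⟩ : ∃ m : ℕ, 2 ≤ p + 2 * (2 * m + N) := by
    obtain ⟨m, hm⟩ := exists_nat_ge ((2 - p) / 2)
    exact ⟨m, by push_cast; nlinarith [(div_le_iff₀ (by norm_num : (0:ℝ) < 2)).mp hm]⟩
  set k : ℕ := 2 * m + N with hk
  set C₀ : ℝ := (Nat.factorial m : ℝ) * (Nat.factorial (m + N) : ℝ) with hC₀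
  have hC₀pos : 0 < C₀ := by positivity
  set C : ℝ := 4 ^ k * C₀ ^ 2 / Real.pi ^ 2 with hC
  have hCpos : 0 < C := by positivity
  have hq : p + 2 * k < -1 → True := fun _ => trivial
  -- the dominating function
  have hdom : IntegrableOn (fun y : ℝ => C * y ^ (-(p + 2 * k))) (Ici (1 : ℝ)) := by
    rw [integrableOn_Ici_iff_integrableOn_Ioi]
    apply Integrable.const_mul
    apply integrableOn_Ioi_rpow_of_lt _ one_pos
    rw [hk]
    push_cast
    linarith
  apply Integrable.mono' hdom
  · apply Measurable.aestronglyMeasurable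
    have h1 : Measurable fun y : ℝ => y ^ p * G N y := by
      apply Measurable.mul
      · exact measurable_id.pow_const p
      · exact ((besselK_measurable N).pow_const 2).add
          (((besselI_measurable N).pow_const 2).const_mul _)
    have h2 : Measurable fun y : ℝ => (y ^ p * G N y)⁻¹ := h1.inv
    simpa only [one_div] using h2
  · rw [ae_restrict_iff' measurableSet_Ici]
    apply Eventually.of_forall
    intro y hy
    have hy1 : (1:ℝ) ≤ y := hy
    have hy0 : (0:ℝ) < y := lt_of_lt_of_le one_pos hy1
    have hI : (y / 2) ^ k / C₀ ≤ besselI N y := besselI_lower N m y hy0.le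
    have hIpos : 0 < (y / 2) ^ k / C₀ := by positivity
    have hG : Real.pi ^ 2 * ((y / 2) ^ k / C₀) ^ 2 ≤ G N y := by
      have hsq : ((y / 2) ^ k / C₀) ^ 2 ≤ besselI N y ^ 2 := pow_le_pow_left₀ hIpos.le hI 2
      have : Real.pi ^ 2 * ((y / 2) ^ k / C₀) ^ 2 ≤ Real.pi ^ 2 * besselI N y ^ 2 :=
        mul_le_mul_of_nonneg_left hsq (by positivity)
      calc Real.pi ^ 2 * ((y / 2) ^ k / C₀) ^ 2 ≤ Real.pi ^ 2 * besselI N y ^ 2 := this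
        _ ≤ G N y := by
            unfold G; nlinarith [sq_nonneg (besselK N y)]
    have hGpos : 0 < G N y :=
      lt_of_lt_of_le (by positivity) hG
    have hyp : (0:ℝ) < y ^ p := Real.rpow_pos_of_pos hy0 p
    have hbound : y ^ p * (Real.pi ^ 2 * ((y / 2) ^ k / C₀) ^ 2) ≤ y ^ p * G N y := by
      gcongr
    have hne : y ^ p * G N y ≠ 0 := by positivity
    rw [norm_of_nonneg (by positivity)]
    have h2 : 1 / (y ^ p * G N y) ≤ 1 / (y ^ p * (Real.pi ^ 2 * ((y / 2) ^ k / C₀) ^ 2)) := by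
      apply one_div_le_one_div_of_le _ hbound
      positivity
    apply h2.trans
    -- rewrite rhs
    have h4 : (2:ℝ) ^ (k * 2) = 4 ^ k := by
      rw [mul_comm, pow_mul]; norm_num
    have hyk : ((y / 2) ^ k) ^ 2 = y ^ (2 * k) / 4 ^ k := by
      rw [← pow_mul, div_pow, h4, mul_comm k 2]
    have hypk : y ^ p * y ^ (2 * k : ℕ) = y ^ (p + 2 * k) := by
      rw [← Real.rpow_natCast y (2 * k), ← Real.rpow_add hy0]
      push_cast
      ring_nf
    have hrw : 1 / (y ^ p * (Real.pi ^ 2 * ((y / 2) ^ k / C₀) ^ 2))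
        = C * (y ^ (p + 2 * k))⁻¹ := by
      rw [div_pow, hyk, hC]
      field_simp
      rw [← hypk]
    rw [hrw, Real.rpow_neg hy0.le]
end

section
/- Let N ≥ 1 be an integer. Then for every real number p with p < 2N+1, the function y ↦ 1/(y^p·G_N(y)) is integrable on (0, 1). -/
open Real MeasureTheory Filter Set Topology

lemma besselI_ge (N : ℕ) {x : ℝ} (hx : 0 < x) : (x/2)^N / (Nat.factorial N : ℝ) ≤ besselI N x := by
  have := Summable.le_tsum (besselI_summable N x) 0 (fun j _ => by positivity)
  simpa [besselI] using this

lemma besselK_integrand_integrable (N : ℕ) {x : ℝ} (hx : 0 < x) :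
    IntegrableOn (fun s : ℝ => Real.exp (-x * Real.cosh s) * Real.cosh (N * s)) (Ioi 0) := by
  apply integrable_of_isBigO_exp_neg (b := 1) one_pos
  · apply Continuous.continuousOn
    fun_prop
  · rw [Asymptotics.isBigO_iff]
    refine ⟨1, ?_⟩
    have h1 : Tendsto (fun s : ℝ => Real.exp s / s ^ 1) atTop atTop :=
      Real.tendsto_exp_div_pow_atTop 1
    have h2 : ∀ᶠ s : ℝ in atTop, Real.exp s / s ^ 1 ≥ 2 * (N + 2) / x :=
      h1.eventually_ge_atTop _
    filter_upwards [h2, eventually_ge_atTop (1 : ℝ)] with s hs hs1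
    have hs0 : (0:ℝ) < s := by linarith
    have hexp : Real.exp s ≥ 2 * (N + 2) / x * s := by
      rw [pow_one] at hs
      calc Real.exp s = Real.exp s / s * s := by field_simp
        _ ≥ 2 * (N + 2) / x * s := by gcongr
    -- cosh s ≥ exp s / 2
    have hcosh : Real.cosh s ≥ Real.exp s / 2 := by
      rw [Real.cosh_eq]
      have := Real.exp_pos (-s)
      linarith
    have hxc : x * Real.cosh s ≥ (N + 2) * s := by
      have k1 : x * Real.exp s ≥ x * (2 * (N + 2) / x * s) :=
        mul_le_mul_of_nonneg_left hexp hx.le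
      have k2 : x * (2 * (N + 2) / x * s) = 2 * ((N:ℝ) + 2) * s := by field_simp
      have k3 : x * Real.cosh s ≥ x * (Real.exp s / 2) :=
        mul_le_mul_of_nonneg_left hcosh hx.le
      rw [k2] at k1
      linarith
    have hcN : Real.cosh ((N:ℝ) * s) ≤ Real.exp ((N:ℝ) * s) := by
      rw [Real.cosh_eq]
      have h := Real.exp_le_exp.mpr (by nlinarith [Nat.cast_nonneg (α := ℝ) N] :
        -((N:ℝ) * s) ≤ (N:ℝ) * s)
      linarith [Real.exp_pos (-((N:ℝ)*s))]
    rw [Real.norm_eq_abs, Real.norm_eq_abs, one_mul, abs_of_nonneg (by positivity),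
      abs_of_nonneg (Real.exp_pos _).le]
    calc Real.exp (-x * Real.cosh s) * Real.cosh ((N:ℝ) * s)
        ≤ Real.exp (-((N + 2) * s)) * Real.exp ((N:ℝ) * s) := by
          apply mul_le_mul _ hcN (by positivity) (Real.exp_pos _).le
          rw [Real.exp_le_exp]; linarith
      _ = Real.exp (-(2 * s)) := by rw [← Real.exp_add]; ring_nf
      _ ≤ Real.exp (-1 * s) := by rw [Real.exp_le_exp]; linarith

lemma besselK_ge (N : ℕ) (hN : 1 ≤ N) {y : ℝ} (hy : 0 < y) (hy1 : y < 1) :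
    Real.exp (-1) * ((y^N)⁻¹ - 1) / (2*N) ≤ besselK N y := by
  have hNR : (0:ℝ) < N := by exact_mod_cast hN
  set L := -Real.log y with hL
  have hL0 : 0 < L := by rw [hL]; simpa using Real.log_neg hy hy1
  have hexpL : Real.exp L = y⁻¹ := by rw [hL, Real.exp_neg, Real.exp_log hy]
  have hint := besselK_integrand_integrable N hy
  have step1 : ∫ s in Ioc (0:ℝ) L, Real.exp (-y * Real.cosh s) * Real.cosh (N*s)
      ≤ besselK N y := by
    apply setIntegral_mono_set hint
    · filter_upwards with s
      positivity
    · exact HasSubset.Subset.eventuallyLE Ioc_subset_Ioi_self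
  have step2 : ∫ s in Ioc (0:ℝ) L, Real.exp (-1) * (Real.exp (N*s)/2)
      ≤ ∫ s in Ioc (0:ℝ) L, Real.exp (-y * Real.cosh s) * Real.cosh (N*s) := by
    apply setIntegral_mono_on
    · exact (Continuous.integrableOn_Ioc (by fun_prop))
    · exact hint.mono_set Ioc_subset_Ioi_self
    · exact measurableSet_Ioc
    · intro s hs
      have hs0 : 0 < s := hs.1
      have hcosh_le : Real.cosh s ≤ y⁻¹ := by
        rw [← hexpL]
        calc Real.cosh s ≤ Real.exp s := by
              rw [Real.cosh_eq]
              have h1 : Real.exp (-s) ≤ Real.exp s := by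
                rw [Real.exp_le_exp]; linarith
              linarith
          _ ≤ Real.exp L := by rw [Real.exp_le_exp]; exact hs.2
      have h1 : Real.exp (-1) ≤ Real.exp (-y * Real.cosh s) := by
        rw [Real.exp_le_exp]
        have : y * Real.cosh s ≤ 1 := by
          calc y * Real.cosh s ≤ y * y⁻¹ := by
                apply mul_le_mul_of_nonneg_left hcosh_le hy.le
            _ = 1 := mul_inv_cancel₀ hy.ne'
        linarith
      have h2 : Real.exp ((N:ℝ)*s)/2 ≤ Real.cosh ((N:ℝ)*s) := by
        rw [Real.cosh_eq]
        linarith [Real.exp_pos (-((N:ℝ)*s))]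
      exact mul_le_mul h1 h2 (by positivity) (Real.exp_pos _).le
  have hFTC : ∫ s in (0:ℝ)..L, Real.exp ((N:ℝ)*s)
      = ((y^N)⁻¹ - 1) / N := by
    have hderiv : ∀ s ∈ uIcc (0:ℝ) L,
        HasDerivAt (fun t : ℝ => Real.exp ((N:ℝ)*t) / N) (Real.exp ((N:ℝ)*s)) s := by
      intro s _
      have h := (((hasDerivAt_id s).const_mul ((N:ℝ))).exp).div_const (N:ℝ)
      simpa [mul_one, mul_comm, mul_div_assoc, mul_div_cancel_left₀ _ hNR.ne'] using h
    have := intervalIntegral.integral_eq_sub_of_hasDerivAt hderiv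
      (((by fun_prop : Continuous (fun s : ℝ => Real.exp ((N:ℝ)*s)))).intervalIntegrable 0 L)
    rw [this]
    rw [Real.exp_nat_mul, hexpL, inv_pow, mul_zero, Real.exp_zero]
    ring
  have step3 : ∫ s in Ioc (0:ℝ) L, Real.exp (-1) * (Real.exp (N*s)/2)
      = Real.exp (-1) * ((y^N)⁻¹ - 1) / (2*N) := by
    rw [← intervalIntegral.integral_of_le hL0.le]
    rw [intervalIntegral.integral_const_mul]
    rw [intervalIntegral.integral_div, hFTC]
    ring
  linarith [step1, step2, step3.symm.le, step3.le]

lemma G_measurable (N : ℕ) : Measurable (G N) :=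
  ((besselK_measurable N).pow_const 2).add
    (((besselI_measurable N).pow_const 2).const_mul _)

lemma G_ge (N : ℕ) (hN : 1 ≤ N) {y : ℝ} (hy : 0 < y) (hy1 : y < 1) :
    min ((Real.exp (-1) / (4 * N)) ^ 2)
      ((Real.pi / (2 ^ N * (Nat.factorial N : ℝ))) ^ 2 / 16) * ((y ^ N)⁻¹) ^ 2 ≤ G N y := by
  have hNR : (0:ℝ) < N := by exact_mod_cast hN
  have hyN : 0 < y ^ N := by positivity
  have hyN1 : y ^ N < 1 := pow_lt_one₀ hy.le hy1 (by omega)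
  have hK := besselK_ge N hN hy hy1
  have hI := besselI_ge N hy
  have hGdef : G N y = besselK N y ^ 2 + Real.pi ^ 2 * besselI N y ^ 2 := rfl
  have hIpos : 0 < besselI N y := lt_of_lt_of_le (by positivity) hI
  rcases le_or_gt (y ^ N) (1/2) with hc | hc
  · -- K dominates
    have h1 : (2:ℝ) ≤ (y ^ N)⁻¹ := by
      rw [le_inv_comm₀ two_pos hyN]; linarith
    have h2 : Real.exp (-1) / (4 * N) * (y ^ N)⁻¹ ≤ besselK N y := by
      calc Real.exp (-1) / (4 * N) * (y ^ N)⁻¹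
          ≤ Real.exp (-1) * ((y ^ N)⁻¹ - 1) / (2 * N) := by
            rw [div_mul_eq_mul_div, div_le_div_iff₀ (by positivity) (by positivity)]
            have h4 : (y ^ N)⁻¹ ≤ 2 * ((y ^ N)⁻¹ - 1) := by linarith
            have h5 := mul_le_mul_of_nonneg_left h4
              (by positivity : (0:ℝ) ≤ Real.exp (-1) * (2*N))
            nlinarith [h5]
        _ ≤ besselK N y := hK
    have h3 : (Real.exp (-1) / (4 * N)) ^ 2 * ((y ^ N)⁻¹) ^ 2 ≤ besselK N y ^ 2 := by
      rw [← mul_pow]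
      apply pow_le_pow_left₀ (by positivity) h2
    calc min _ _ * ((y ^ N)⁻¹) ^ 2 ≤ (Real.exp (-1) / (4 * N)) ^ 2 * ((y ^ N)⁻¹) ^ 2 := by
          gcongr; exact min_le_left _ _
      _ ≤ besselK N y ^ 2 := h3
      _ ≤ G N y := by rw [hGdef]; nlinarith [sq_nonneg (besselI N y), Real.pi_pos]
  · -- I dominates
    have h1 : (y ^ N)⁻¹ < 2 := by
      rw [inv_lt_comm₀ hyN two_pos]; linarith
    have h2 : Real.pi / (2 ^ N * (Nat.factorial N : ℝ)) * (1/2) ≤ Real.pi * besselI N y := by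
      calc Real.pi / (2 ^ N * (Nat.factorial N : ℝ)) * (1/2)
          ≤ Real.pi / (2 ^ N * (Nat.factorial N : ℝ)) * (y ^ N) := by
            gcongr
        _ = Real.pi * ((y/2) ^ N / (Nat.factorial N : ℝ)) := by
            rw [div_pow]; ring
        _ ≤ Real.pi * besselI N y :=
            mul_le_mul_of_nonneg_left hI Real.pi_pos.le
    have h3 : (Real.pi / (2 ^ N * (Nat.factorial N : ℝ))) ^ 2 / 4 ≤ Real.pi ^ 2 * besselI N y ^ 2 := by
      have := pow_le_pow_left₀ (by positivity) h2 2
      calc (Real.pi / (2 ^ N * (Nat.factorial N : ℝ))) ^ 2 / 4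
          = (Real.pi / (2 ^ N * (Nat.factorial N : ℝ)) * (1/2)) ^ 2 := by ring
        _ ≤ (Real.pi * besselI N y) ^ 2 := this
        _ = Real.pi ^ 2 * besselI N y ^ 2 := by ring
    calc min _ _ * ((y ^ N)⁻¹) ^ 2
        ≤ (Real.pi / (2 ^ N * (Nat.factorial N : ℝ))) ^ 2 / 16 * ((y ^ N)⁻¹) ^ 2 := by
          gcongr; exact min_le_right _ _
      _ ≤ (Real.pi / (2 ^ N * (Nat.factorial N : ℝ))) ^ 2 / 16 * 4 := by
          have ht : ((y ^ N)⁻¹) ^ 2 ≤ 4 := by nlinarith [inv_pos.mpr hyN]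
          exact mul_le_mul_of_nonneg_left ht (by positivity)
      _ = (Real.pi / (2 ^ N * (Nat.factorial N : ℝ))) ^ 2 / 4 := by ring
      _ ≤ Real.pi ^ 2 * besselI N y ^ 2 := h3
      _ ≤ G N y := by rw [hGdef]; nlinarith [sq_nonneg (besselK N y)]

theorem integrable_inv_rpow_mul_G_Ioo_zero_one (N : ℕ) (hN : 1 ≤ N) (p : ℝ)
    (hp : p < 2 * N + 1) :
    IntegrableOn (fun y : ℝ => 1 / (y ^ p * G N y)) (Ioo (0 : ℝ) 1) := by
  set c : ℝ := min ((Real.exp (-1) / (4 * N)) ^ 2)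
      ((Real.pi / (2 ^ N * (Nat.factorial N : ℝ))) ^ 2 / 16) with hc
  have hNR : (0:ℝ) < N := by exact_mod_cast hN
  have hcpos : 0 < c := by
    apply lt_min
    · positivity
    · positivity
  have hr : (-1:ℝ) < 2 * N - p := by linarith
  -- dominating function
  have hgint : IntegrableOn (fun y : ℝ => c⁻¹ * y ^ (2 * N - p)) (Ioo (0:ℝ) 1) := by
    have h1 : IntervalIntegrable (fun x : ℝ => x ^ (2 * N - p)) volume 0 1 :=
      intervalIntegral.intervalIntegrable_rpow' hr
    rw [intervalIntegrable_iff_integrableOn_Ioc_of_le zero_le_one] at h1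
    exact ((h1.mono_set Ioo_subset_Ioc_self).const_mul _)
  apply hgint.mono'
  · apply Measurable.aestronglyMeasurable
    apply Measurable.div measurable_const
    exact Measurable.mul (by measurability) (G_measurable N)
  · filter_upwards [ae_restrict_mem measurableSet_Ioo] with y hy
    obtain ⟨hy0, hy1⟩ := hy
    have hG := G_ge N hN hy0 hy1
    have hGpos : 0 < G N y := lt_of_lt_of_le (by positivity) hG
    have hyp : 0 < y ^ p := Real.rpow_pos_of_pos hy0 _
    rw [Real.norm_eq_abs, abs_of_nonneg (by positivity)]
    have hconv : ((y ^ N)⁻¹) ^ 2 = y ^ (-(2 * (N:ℝ))) := by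
      rw [← Real.rpow_natCast y N, ← Real.rpow_neg hy0.le, ← Real.rpow_natCast _ 2,
        ← Real.rpow_mul hy0.le]
      norm_num
      ring_nf
    have key : c * y ^ (p - 2 * N) ≤ y ^ p * G N y := by
      calc c * y ^ (p - 2 * N) = y ^ p * (c * y ^ (-(2 * (N:ℝ)))) := by
            rw [← mul_assoc, mul_comm (y ^ p) c, mul_assoc, ← Real.rpow_add hy0]
            ring_nf
        _ ≤ y ^ p * G N y := by
            rw [← hconv]
            exact mul_le_mul_of_nonneg_left hG hyp.le
    have hcy : 0 < c * y ^ (p - 2 * N) := by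
      have := Real.rpow_pos_of_pos hy0 (p - 2 * N); positivity
    calc 1 / (y ^ p * G N y) ≤ 1 / (c * y ^ (p - 2 * N)) :=
          one_div_le_one_div_of_le hcy key
      _ = c⁻¹ * y ^ (2 * N - p) := by
          rw [one_div, mul_inv, ← Real.rpow_neg hy0.le, neg_sub]
end

section
/- Let z ∈ ℂ with Re z < 0, let r > 0 and let K ≥ 0 be an integer. Then, as t → ∞, ∫_0^∞ exp(−r²x²/(2t) + z·x) dx = −∑_{n=0}^{K} b_n·r^{2n}/(2^n·z^{2n+1})·t^{−n} + O(t^{−(K+1)}). -/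
open Real MeasureTheory Filter Set Topology
open scoped Nat


lemma aux_integrableOn_pow_mul_exp_neg (m : ℕ) {c : ℝ} (hc : 0 < c) :
    IntegrableOn (fun x : ℝ => x ^ m * Real.exp (-c * x)) (Ioi 0) := by
  have h := integrableOn_rpow_mul_exp_neg_mul_rpow (p := 1) (s := (m : ℝ)) (b := c)
    (by linarith [Nat.cast_nonneg (α := ℝ) m]) one_pos hc
  refine h.congr_fun (fun x hx => ?_) measurableSet_Ioi
  beta_reduce
  rw [Real.rpow_natCast, Real.rpow_one]

lemma aux_integral_pow_mul_exp_neg (m : ℕ) {c : ℝ} (hc : 0 < c) :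
    ∫ x in Ioi (0:ℝ), x ^ m * Real.exp (-c * x) = m ! / c ^ (m+1) := by
  have h := Real.integral_rpow_mul_exp_neg_mul_Ioi (a := (m:ℝ) + 1) (r := c) (by positivity) hc
  rw [show ((m:ℝ) + 1 - 1) = (m:ℝ) by ring] at h
  have h2 : ∫ x in Ioi (0:ℝ), x ^ m * Real.exp (-c * x)
      = ∫ x in Ioi (0:ℝ), x ^ (m:ℝ) * Real.exp (-(c * x)) := by
    refine setIntegral_congr_fun measurableSet_Ioi (fun x hx => ?_)
    rw [Real.rpow_natCast, neg_mul]
  rw [h2, h, Real.Gamma_nat_eq_factorial,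
    show ((m:ℝ) + 1) = ((m + 1 : ℕ) : ℝ) by push_cast; ring, Real.rpow_natCast]
  rw [div_pow, one_pow]
  ring

lemma aux_integrableOn_pow_mul_cexp {z : ℂ} (hz : z.re < 0) (m : ℕ) :
    IntegrableOn (fun x : ℝ => (x:ℂ) ^ m * Complex.exp (z * x)) (Ioi 0) := by
  have h1 := aux_integrableOn_pow_mul_exp_neg m (c := -z.re) (by linarith)
  refine h1.mono' ?_ ?_
  · exact ((Complex.continuous_ofReal.pow m).mul
      (Complex.continuous_exp.comp (continuous_const.mul Complex.continuous_ofReal))).aestronglyMeasurable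
  · filter_upwards [ae_restrict_mem measurableSet_Ioi] with x hx
    rw [norm_mul, norm_pow, Complex.norm_exp]
    simp only [Complex.norm_real, Complex.mul_re, Complex.ofReal_re, Complex.ofReal_im,
      mul_zero, sub_zero, neg_neg]
    rw [Real.norm_eq_abs, abs_of_pos (mem_Ioi.mp hx)]

lemma aux_tendsto_pow_mul_cexp {z : ℂ} (hz : z.re < 0) (m : ℕ) :
    Tendsto (fun x : ℝ => (x:ℂ) ^ m * Complex.exp (z * x)) atTop (𝓝 0) := by
  rw [tendsto_zero_iff_norm_tendsto_zero]
  have key : ∀ᶠ x : ℝ in atTop, ‖(x:ℂ) ^ m * Complex.exp (z * x)‖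
      = ((-z.re)⁻¹) ^ m * ((-z.re * x) ^ m * Real.exp (-(-z.re * x))) := by
    filter_upwards [eventually_gt_atTop 0] with x hx
    rw [norm_mul, norm_pow, Complex.norm_exp]
    simp only [Complex.norm_real, Complex.mul_re, Complex.ofReal_re, Complex.ofReal_im,
      mul_zero, sub_zero]
    rw [Real.norm_eq_abs, abs_of_pos hx, show -(-z.re * x) = z.re * x by ring, mul_pow,
      ← mul_assoc, ← mul_pow]
    have hne : (-z.re) ≠ 0 := by linarith
    rw [mul_pow, ← mul_assoc, ← mul_pow, inv_mul_cancel₀ hne, one_pow, one_mul]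
  rw [tendsto_congr' key]
  have h2 : Tendsto (fun x : ℝ => -z.re * x) atTop atTop :=
    Tendsto.const_mul_atTop (by linarith) tendsto_id
  have := ((tendsto_pow_mul_exp_neg_atTop_nhds_zero m).comp h2).const_mul ((-z.re)⁻¹ ^ m)
  rw [mul_zero] at this
  exact this

lemma aux_integral_pow_mul_cexp {z : ℂ} (hz : z.re < 0) (m : ℕ) :
    ∫ x in Ioi (0:ℝ), (x:ℂ) ^ m * Complex.exp (z * x) = m ! / (-z) ^ (m+1) := by
  have hz0 : z ≠ 0 := fun h => by simp [h] at hz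
  have hnz : (-z) ≠ 0 := neg_ne_zero.mpr hz0
  induction m with
  | zero =>
    have hd : ∀ x : ℝ, HasDerivAt (fun x : ℝ => z⁻¹ * Complex.exp (z * x))
        ((x:ℂ) ^ 0 * Complex.exp (z * x)) x := by
      intro x
      have h := ((((hasDerivAt_id (x:ℂ)).const_mul z).cexp).const_mul z⁻¹).comp_ofReal
      convert h using 1 <;> simp only [id]
      field_simp
    have heq := integral_Ioi_of_hasDerivAt_of_tendsto' (fun x _ => hd x)
      (aux_integrableOn_pow_mul_cexp hz 0)
      (by simpa using (aux_tendsto_pow_mul_cexp hz 0).const_mul z⁻¹)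
    rw [heq]
    simp [Nat.factorial]
  | succ m ih =>
    have hd : ∀ x : ℝ, HasDerivAt (fun x : ℝ => (x:ℂ) ^ (m+1) * Complex.exp (z * x))
        (((m:ℂ)+1) * ((x:ℂ) ^ m * Complex.exp (z * x))
          + z * ((x:ℂ) ^ (m+1) * Complex.exp (z * x))) x := by
      intro x
      have h := (((hasDerivAt_pow (m+1) (x:ℂ)).mul
        (((hasDerivAt_id (x:ℂ)).const_mul z).cexp))).comp_ofReal
      convert h using 1 <;> simp only [id]
      simp [Nat.add_sub_cancel]
      push_cast
      ring
    have hi1 := (aux_integrableOn_pow_mul_cexp hz m).const_mul ((m:ℂ)+1)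
    have hi2 := (aux_integrableOn_pow_mul_cexp hz (m+1)).const_mul z
    have heq := integral_Ioi_of_hasDerivAt_of_tendsto' (fun x _ => hd x)
      (hi1.add hi2) (aux_tendsto_pow_mul_cexp hz (m+1))
    rw [integral_add hi1 hi2, integral_const_mul, integral_const_mul, ih] at heq
    have h00 : ((0:ℝ):ℂ) ^ (m+1) * Complex.exp (z * (0:ℝ)) = 0 := by
      simp
    rw [h00, zero_sub, neg_zero] at heq
    -- heq : (m+1) * (m!/(-z)^(m+1)) + z * I = 0
    have hI : (∫ x in Ioi (0:ℝ), (x:ℂ) ^ (m+1) * Complex.exp (z * x))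
        = -(((m:ℂ)+1) * ((m ! : ℂ) / (-z) ^ (m+1))) / z := by
      field_simp at heq ⊢
      linear_combination heq
    rw [hI, Nat.factorial_succ]
    push_cast
    rw [pow_succ]
    field_simp
    ring_nf


noncomputable def expS (N : ℕ) (y : ℝ) : ℝ := ∑ n ∈ Finset.range N, (-y) ^ n / n !

lemma expS_continuous (N : ℕ) : Continuous (expS N) := by
  unfold expS
  exact continuous_finset_sum _ (fun n _ => ((continuous_neg.pow n).div_const _))

lemma expS_zero_eval (N : ℕ) : expS (N+1) 0 = 1 := by
  unfold expS
  rw [Finset.sum_range_succ']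
  simp

lemma expS_hasDerivAt (N : ℕ) (y : ℝ) : HasDerivAt (expS (N+1)) (-(expS N y)) y := by
  induction N generalizing y with
  | zero =>
    have h1 : expS 1 = fun _ : ℝ => 1 := by funext u; simp [expS]
    have h2 : expS 0 y = 0 := by simp [expS]
    rw [h1, h2, neg_zero]
    exact hasDerivAt_const y 1
  | succ N ih =>
    have h1 : expS (N+2) = fun u => expS (N+1) u + (-u) ^ (N+1) / (N+1)! := by
      funext u
      simp [expS, Finset.sum_range_succ]
    have h2 : HasDerivAt (fun u : ℝ => (-u) ^ (N+1) / (N+1)!) (-((-y) ^ N / N !)) y := by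
      have h3 : HasDerivAt (fun u : ℝ => (-u) ^ (N+1))
          (((N:ℝ)+1) * (-y) ^ N * (-1)) y := by
        have := (hasDerivAt_pow (N+1) (-y)).comp y (hasDerivAt_neg y)
        simpa [Nat.add_sub_cancel, Function.comp_def] using this
      have := h3.div_const ((N+1)! : ℝ)
      refine this.congr_deriv ?_
      rw [Nat.factorial_succ]
      push_cast
      have hN : ((N:ℝ)+1) ≠ 0 := by positivity
      field_simp
    rw [h1]
    have := (ih y).add h2
    refine this.congr_deriv ?_
    simp [expS, Finset.sum_range_succ]
    ring

lemma exp_taylor_bound (N : ℕ) : ∀ y : ℝ, 0 ≤ y →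
    |Real.exp (-y) - expS N y| ≤ y ^ N / N ! := by
  induction N with
  | zero =>
    intro y hy
    simp only [expS, Finset.range_zero, Finset.sum_empty, sub_zero, Nat.factorial_zero,
      pow_zero, Nat.cast_one, div_one]
    rw [abs_of_pos (Real.exp_pos _)]
    exact by
      rw [Real.exp_le_one_iff]
      linarith
  | succ N ih =>
    intro y hy
    have hd : ∀ s : ℝ, HasDerivAt (fun u => Real.exp (-u) - expS (N+1) u)
        (-(Real.exp (-s) - expS N s)) s := by
      intro s
      have h1 : HasDerivAt (fun u : ℝ => Real.exp (-u)) (Real.exp (-s) * (-1)) s :=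
        (Real.hasDerivAt_exp (-s)).comp s (hasDerivAt_neg s)
      have := h1.sub (expS_hasDerivAt N s)
      refine this.congr_deriv ?_
      ring
    have hcont : Continuous (fun u : ℝ => -(Real.exp (-u) - expS N u)) :=
      ((Real.continuous_exp.comp continuous_neg).sub (expS_continuous N)).neg
    have hftc : (Real.exp (-y) - expS (N+1) y)
        = ∫ s in (0:ℝ)..y, -(Real.exp (-s) - expS N s) := by
      rw [intervalIntegral.integral_eq_sub_of_hasDerivAt (fun s _ => hd s)
        (hcont.intervalIntegrable 0 y)]
      rw [expS_zero_eval]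
      simp
    rw [hftc]
    calc |∫ s in (0:ℝ)..y, -(Real.exp (-s) - expS N s)|
        ≤ ∫ s in (0:ℝ)..y, |(-(Real.exp (-s) - expS N s))| := by
          rw [← Real.norm_eq_abs]
          refine (intervalIntegral.norm_integral_le_integral_norm hy).trans_eq ?_
          rfl
      _ ≤ ∫ s in (0:ℝ)..y, s ^ N / N ! := by
          refine intervalIntegral.integral_mono_on hy
            ((hcont.abs).intervalIntegrable 0 y)
            (((continuous_pow N).div_const _).intervalIntegrable 0 y) ?_
          intro s hs
          rw [abs_neg]
          exact ih s hs.1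
      _ = y ^ (N+1) / (N+1)! := by
          rw [intervalIntegral.integral_div, integral_pow]
          rw [Nat.factorial_succ]
          push_cast
          field_simp
          simp

/-- `b_m = (-1)^m (2m)! / m!`. -/
noncomputable def b (m : ℕ) : ℝ :=
  (-1) ^ m * (Nat.factorial (2 * m) : ℝ) / (Nat.factorial m : ℝ)

theorem gaussian_exp_integral_expansion (z : ℂ) (hz : z.re < 0) (r : ℝ) (hr : 0 < r) (K : ℕ) :
    (fun t : ℝ =>
        (∫ x in Ioi (0 : ℝ),
            Complex.exp (-((r ^ 2 * x ^ 2 / (2 * t) : ℝ) : ℂ) + z * (x : ℂ)))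
          + ∑ n ∈ Finset.range (K + 1),
              ((b n * r ^ (2 * n) / 2 ^ n : ℝ) : ℂ) * z ^ (-(2 * (n : ℤ) + 1)) *
                ((t ^ (-(n : ℤ)) : ℝ) : ℂ))
      =O[atTop] fun t : ℝ => t ^ (-((K : ℤ) + 1)) := by
  have hz0 : z ≠ 0 := fun h => by simp [h] at hz
  have hcneg : (0:ℝ) < -z.re := by linarith
  set M : ℝ := ((2*(K+1))! : ℝ) / (-z.re) ^ (2*(K+1)+1) with hM
  have hM0 : 0 ≤ M := by positivity
  rw [Asymptotics.isBigO_iff]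
  refine ⟨(r^2/2)^(K+1) / ((K+1)! : ℝ) * M, ?_⟩
  filter_upwards [eventually_ge_atTop 1] with t ht
  have ht0 : (0:ℝ) < t := by linarith
  set a : ℝ := r^2 / (2*t) with ha_def
  have ha : 0 < a := by positivity
  set f1 : ℝ → ℂ := fun x => ((Real.exp (-(a*x^2)) : ℝ) : ℂ) * Complex.exp (z*x) with hf1
  set g : ℕ → ℝ → ℂ := fun n x =>
    (((-a)^n / n ! : ℝ) : ℂ) * ((x:ℂ)^(2*n) * Complex.exp (z*x)) with hg
  -- the statement integral equals ∫ f1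
  have hint_eq : (∫ x in Ioi (0:ℝ),
      Complex.exp (-((r ^ 2 * x ^ 2 / (2 * t) : ℝ) : ℂ) + z * (x : ℂ))) = ∫ x in Ioi (0:ℝ), f1 x := by
    refine setIntegral_congr_fun measurableSet_Ioi (fun x _ => ?_)
    simp only [hf1]
    rw [Complex.exp_add, Complex.ofReal_exp]
    congr 2
    rw [ha_def]
    have htne : ((t:ℝ):ℂ) ≠ 0 := by exact_mod_cast ne_of_gt ht0
    push_cast
    field_simp
  -- integrability of f1
  have hif1 : IntegrableOn f1 (Ioi 0) := by
    have hb := aux_integrableOn_pow_mul_exp_neg 0 hcneg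
    refine hb.mono' ?_ ?_
    · exact ((Complex.continuous_ofReal.comp
        ((Real.continuous_exp.comp ((continuous_const.mul (continuous_pow 2)).neg)))).mul
        (Complex.continuous_exp.comp (continuous_const.mul Complex.continuous_ofReal))).aestronglyMeasurable
    · filter_upwards [ae_restrict_mem measurableSet_Ioi] with x hx
      rw [hf1]
      simp only [pow_zero, one_mul, norm_mul, Complex.norm_real, Real.norm_eq_abs]
      rw [Complex.norm_exp]
      simp only [Complex.mul_re, Complex.ofReal_re, Complex.ofReal_im, mul_zero, sub_zero]
      rw [abs_of_pos (Real.exp_pos _), neg_neg]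
      have h1 : Real.exp (-(a*x^2)) ≤ 1 := by
        rw [Real.exp_le_one_iff]
        nlinarith [sq_nonneg x, mem_Ioi.mp hx]
      nlinarith [Real.exp_pos (z.re * x)]
  -- integrability of each g n
  have hig : ∀ n, IntegrableOn (g n) (Ioi 0) := fun n =>
    (aux_integrableOn_pow_mul_cexp hz (2*n)).const_mul _
  have hif2 : IntegrableOn (fun x => ∑ n ∈ Finset.range (K+1), g n x) (Ioi 0) :=
    integrable_finset_sum _ (fun n _ => hig n)
  -- value of ∫ g n
  have hgval : ∀ n, ∫ x in Ioi (0:ℝ), g n x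
      = (((-a)^n / n ! : ℝ) : ℂ) * ((2*n)! : ℂ) / (-z) ^ (2*n+1) := by
    intro n
    rw [hg]
    simp only
    rw [integral_const_mul, aux_integral_pow_mul_cexp hz (2*n)]
    ring
  -- the statement sum is - ∫ Σ g n
  have hsum_eq : (∑ n ∈ Finset.range (K + 1),
        ((b n * r ^ (2 * n) / 2 ^ n : ℝ) : ℂ) * z ^ (-(2 * (n : ℤ) + 1)) *
          ((t ^ (-(n : ℤ)) : ℝ) : ℂ))
      = - ∫ x in Ioi (0:ℝ), ∑ n ∈ Finset.range (K+1), g n x := by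
    rw [integral_finset_sum _ (fun n _ => hig n), ← Finset.sum_neg_distrib]
    refine Finset.sum_congr rfl (fun n _ => ?_)
    rw [hgval n]
    rw [show (-(2 * (n:ℤ) + 1)) = -((2*n+1 : ℕ) : ℤ) by push_cast; ring, zpow_neg, zpow_natCast]
    rw [show (-(n:ℤ)) = -((n:ℕ) : ℤ) from rfl, zpow_neg, zpow_natCast]
    rw [show ((-z) : ℂ) ^ (2*n+1) = -z^(2*n+1) from Odd.neg_pow ⟨n, by ring⟩ z]
    rw [show ((-a) : ℝ) ^ n = (-1)^n * a^n from by rw [neg_pow]]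
    rw [b, ha_def]
    have hfn : ((n ! : ℝ) : ℂ) ≠ 0 := by exact_mod_cast Nat.cast_ne_zero.mpr (Nat.factorial_ne_zero n)
    have htne : (t : ℝ) ≠ 0 := ne_of_gt ht0
    push_cast
    have hzp : (z : ℂ) ^ (2*n+1) ≠ 0 := pow_ne_zero _ hz0
    field_simp
    rw [div_pow, mul_pow, ← pow_mul]
    field_simp
  -- now rewrite LHS as single integral of remainder
  have hsplit : ((∫ x in Ioi (0 : ℝ),
            Complex.exp (-((r ^ 2 * x ^ 2 / (2 * t) : ℝ) : ℂ) + z * (x : ℂ)))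
          + ∑ n ∈ Finset.range (K + 1),
              ((b n * r ^ (2 * n) / 2 ^ n : ℝ) : ℂ) * z ^ (-(2 * (n : ℤ) + 1)) *
                ((t ^ (-(n : ℤ)) : ℝ) : ℂ))
      = ∫ x in Ioi (0:ℝ), (f1 x - ∑ n ∈ Finset.range (K+1), g n x) := by
    rw [hint_eq, hsum_eq, integral_sub hif1 hif2]
    ring
  rw [hsplit]
  -- bound the remainder integral
  have hbd : ‖∫ x in Ioi (0:ℝ), (f1 x - ∑ n ∈ Finset.range (K+1), g n x)‖
      ≤ ∫ x in Ioi (0:ℝ), a^(K+1) / ((K+1)! : ℝ) * (x^(2*(K+1)) * Real.exp (-(-z.re) * x)) := by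
    refine norm_integral_le_of_norm_le
      ((aux_integrableOn_pow_mul_exp_neg (2*(K+1)) hcneg).const_mul _) ?_
    filter_upwards [ae_restrict_mem measurableSet_Ioi] with x hx
    have hxx : (0:ℝ) ≤ a * x^2 := by positivity
    have hgs : (∑ n ∈ Finset.range (K+1), g n x)
        = ((expS (K+1) (a*x^2) : ℝ) : ℂ) * Complex.exp (z*x) := by
      rw [expS]
      push_cast
      rw [Finset.sum_mul]
      refine Finset.sum_congr rfl (fun n _ => ?_)
      rw [hg]
      simp only
      rw [pow_mul]
      push_cast
      ring
    rw [hgs, hf1]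
    simp only
    rw [← sub_mul, norm_mul]
    rw [Complex.norm_exp]
    simp only [Complex.mul_re, Complex.ofReal_re, Complex.ofReal_im, mul_zero, sub_zero]
    rw [← Complex.ofReal_sub, Complex.norm_real, Real.norm_eq_abs]
    have hE := exp_taylor_bound (K+1) (a*x^2) hxx
    have hexp : Real.exp (z.re * x) ≤ Real.exp (z.re * x) := le_refl _
    have h2 : (a*x^2)^(K+1) / ((K+1)! : ℝ) * Real.exp (z.re * x)
        = a^(K+1) / ((K+1)! : ℝ) * (x^(2*(K+1)) * Real.exp (-(-z.re) * x)) := by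
      rw [neg_neg, mul_pow, pow_mul]
      ring
    rw [← h2]
    have he0 : (0:ℝ) < Real.exp (z.re * x) := Real.exp_pos _
    exact mul_le_mul_of_nonneg_right hE he0.le |>.trans_eq rfl
  -- compute the bound integral
  have hbval : (∫ x in Ioi (0:ℝ), a^(K+1) / ((K+1)! : ℝ) * (x^(2*(K+1)) * Real.exp (-(-z.re) * x)))
      = a^(K+1) / ((K+1)! : ℝ) * M := by
    rw [integral_const_mul, aux_integral_pow_mul_exp_neg (2*(K+1)) hcneg, hM]
  rw [hbval] at hbd
  refine hbd.trans ?_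
  have hnorm : ‖(t:ℝ) ^ (-((K:ℤ) + 1))‖ = (t^(K+1))⁻¹ := by
    rw [show (-((K:ℤ)+1)) = -((K+1 : ℕ) : ℤ) by push_cast; ring, zpow_neg, zpow_natCast,
      Real.norm_eq_abs, abs_of_pos (by positivity)]
  rw [hnorm]
  have haK : a^(K+1) = (r^2/2)^(K+1) * (t^(K+1))⁻¹ := by
    rw [ha_def]
    rw [show r^2/(2*t) = (r^2/2) * t⁻¹ by field_simp]
    rw [mul_pow, inv_pow]
  exact le_of_eq (by rw [haK]; ring)
end

section
/- For all integers α ≥ 0 and β ≥ 0, the double integral ∫_0^∞ ∫_0^∞ v^{2α+1}·(log(1/v))^β·e^{−uv}·|R_α(u²)| du dv is finite. -/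
open Real MeasureTheory Filter Set Topology

/-- Remainder of the Taylor expansion of `e^{-x}`. -/
noncomputable def R (n : ℕ) (x : ℝ) : ℝ :=
  Real.exp (-x) - ∑ k ∈ Finset.range (n + 1), (-1) ^ k * x ^ k / (Nat.factorial k : ℝ)

lemma R_def (n : ℕ) (x : ℝ) : R n x =
    Real.exp (-x) - ∑ k ∈ Finset.range (n + 1), (-1) ^ k * x ^ k / (Nat.factorial k : ℝ) := rfl

lemma R_zero (n : ℕ) : R n 0 = 0 := by
  simp [R, Finset.sum_range_succ']

lemma continuous_R (n : ℕ) : Continuous (R n) := by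
  unfold R; fun_prop

lemma R_hasDerivAt (n : ℕ) (x : ℝ) : HasDerivAt (R (n+1)) (-(R n x)) x := by
  have h1 : HasDerivAt (fun x : ℝ => Real.exp (-x)) (-Real.exp (-x)) x := by
    simpa using (hasDerivAt_neg x).exp
  have h2 : ∀ k : ℕ, HasDerivAt (fun x : ℝ => (-1:ℝ)^k * x^k / (Nat.factorial k : ℝ))
      ((-1:ℝ)^k * ((k:ℝ) * x^(k-1)) / (Nat.factorial k : ℝ)) x := by
    intro k
    simpa [mul_div_assoc] using ((hasDerivAt_pow k x).const_mul ((-1:ℝ)^k)).div_const _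
  have hsum : HasDerivAt (fun x : ℝ => ∑ k ∈ Finset.range (n+2),
      (-1:ℝ)^k * x^k / (Nat.factorial k : ℝ))
      (∑ k ∈ Finset.range (n+2), (-1:ℝ)^k * ((k:ℝ) * x^(k-1)) / (Nat.factorial k : ℝ)) x :=
    HasDerivAt.fun_sum (fun k _ => h2 k)
  have key : ∑ k ∈ Finset.range (n+2), (-1:ℝ)^k * ((k:ℝ) * x^(k-1)) / (Nat.factorial k : ℝ)
      = -∑ k ∈ Finset.range (n+1), (-1:ℝ)^k * x^k / (Nat.factorial k : ℝ) := by
    rw [Finset.sum_range_succ']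
    simp only [Nat.cast_zero, zero_mul, mul_zero, zero_div, add_zero]
    rw [← Finset.sum_neg_distrib]
    refine Finset.sum_congr rfl fun i _ => ?_
    have h0 : ((Nat.factorial i : ℝ)) ≠ 0 := Nat.cast_ne_zero.2 (Nat.factorial_ne_zero i)
    rw [Nat.factorial_succ]
    push_cast
    field_simp
    ring
  have h := h1.sub hsum
  rw [key] at h
  have hval : -Real.exp (-x) - (-∑ k ∈ Finset.range (n+1),
      (-1:ℝ)^k * x^k / (Nat.factorial k : ℝ)) = -(R n x) := by
    simp only [R]; ring
  rw [hval] at h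
  exact h


lemma R_succ_eq (n : ℕ) (x : ℝ) : R (n+1) x = -∫ t in (0:ℝ)..x, R n t := by
  have h : ∫ t in (0:ℝ)..x, -(R n t) = R (n+1) x - R (n+1) 0 :=
    intervalIntegral.integral_eq_sub_of_hasDerivAt (fun t _ => R_hasDerivAt n t)
      ((continuous_R n).neg.intervalIntegrable 0 x)
  rw [R_zero, sub_zero, intervalIntegral.integral_neg] at h
  linarith

lemma R_boundA (n : ℕ) {x : ℝ} (hx : 0 ≤ x) :
    |R n x| ≤ x ^ (n+1) / (Nat.factorial (n+1) : ℝ) := by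
  induction n generalizing x with
  | zero =>
    have h0 : R 0 x = Real.exp (-x) - 1 := by simp [R_def]
    have h1 : Real.exp (-x) ≤ 1 := Real.exp_le_one_iff.2 (by linarith)
    have h2 : 1 - x ≤ Real.exp (-x) := by
      have := Real.add_one_le_exp (-x); linarith
    rw [h0]
    have hfac : ((Nat.factorial 1 : ℕ) : ℝ) = 1 := by norm_num
    rw [pow_one, hfac, div_one, abs_le]; constructor <;> linarith
  | succ n ih =>
    have hcont : Continuous fun t : ℝ => |R n t| := (continuous_R n).abs
    calc |R (n+1) x| = |∫ t in (0:ℝ)..x, R n t| := by rw [R_succ_eq, abs_neg]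
      _ ≤ ∫ t in (0:ℝ)..x, |R n t| := by
          simpa [Real.norm_eq_abs] using
            intervalIntegral.norm_integral_le_integral_norm (f := R n) (a := 0) (b := x)
              (μ := volume) hx
      _ ≤ ∫ t in (0:ℝ)..x, t ^ (n+1) / (Nat.factorial (n+1) : ℝ) := by
          refine intervalIntegral.integral_mono_on hx (hcont.intervalIntegrable 0 x)
            ((continuous_pow (n+1)).div_const _ |>.intervalIntegrable 0 x) fun t ht => ih ht.1
      _ = x ^ (n+2) / (Nat.factorial (n+2) : ℝ) := by
          rw [intervalIntegral.integral_div, integral_pow]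
          rw [Nat.factorial_succ (n+1)]
          push_cast
          have h1 : ((Nat.factorial (n+1) : ℝ)) ≠ 0 := Nat.cast_ne_zero.2 (Nat.factorial_ne_zero _)
          field_simp
          simp

lemma R_boundB (n : ℕ) {x : ℝ} (hx : 0 ≤ x) :
    |R n x| ≤ (n + 2 : ℝ) * (1 + x ^ n) := by
  have h1 : |Real.exp (-x)| ≤ 1 := by
    rw [abs_of_pos (Real.exp_pos _)]
    exact Real.exp_le_one_iff.2 (by linarith)
  have h2 : ∀ k ∈ Finset.range (n+1), |(-1:ℝ)^k * x^k / (Nat.factorial k : ℝ)| ≤ 1 + x ^ n := by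
    intro k hk
    have hk' : k ≤ n := Nat.lt_succ_iff.1 (Finset.mem_range.1 hk)
    have hfac : (1:ℝ) ≤ (Nat.factorial k : ℝ) := by exact_mod_cast Nat.one_le_iff_ne_zero.2 (Nat.factorial_ne_zero k)
    have habs : |(-1:ℝ)^k * x^k / (Nat.factorial k : ℝ)| = x^k / (Nat.factorial k : ℝ) := by
      rw [abs_div, abs_mul, abs_pow, abs_pow, abs_neg, abs_one, one_pow, one_mul,
        abs_of_nonneg hx, abs_of_nonneg (by positivity : (0:ℝ) ≤ (Nat.factorial k : ℝ))]
    rw [habs]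
    have hxk : x ^ k ≤ 1 + x ^ n := by
      rcases le_total x 1 with hx1 | hx1
      · have hk1 : x ^ k ≤ 1 := pow_le_one₀ hx hx1
        have hn0 : (0:ℝ) ≤ x ^ n := by positivity
        linarith
      · have hkn : x ^ k ≤ x ^ n := pow_le_pow_right₀ hx1 hk'
        linarith
    calc x ^ k / (Nat.factorial k : ℝ) ≤ x ^ k := by
          apply div_le_self (by positivity) hfac
      _ ≤ 1 + x ^ n := hxk
  calc |R n x| ≤ |Real.exp (-x)| + |∑ k ∈ Finset.range (n+1), (-1:ℝ)^k * x^k / (Nat.factorial k : ℝ)| := by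
        rw [R_def]; exact abs_sub _ _
    _ ≤ 1 + ∑ k ∈ Finset.range (n+1), (1 + x ^ n) := by
        gcongr
        exact (Finset.abs_sum_le_sum_abs _ _).trans (Finset.sum_le_sum h2)
    _ = 1 + (n+1 : ℝ) * (1 + x ^ n) := by
        rw [Finset.sum_const, Finset.card_range]; push_cast; ring
    _ ≤ (n + 2 : ℝ) * (1 + x ^ n) := by
        have : (0:ℝ) ≤ x ^ n := by positivity
        nlinarith


lemma integrableOn_pow_mul_exp (m : ℕ) {v : ℝ} (hv : 0 < v) :
    IntegrableOn (fun u : ℝ => u ^ m * Real.exp (-(v * u))) (Ioi 0) := by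
  have hm : (-1:ℝ) < (m:ℝ) := lt_of_lt_of_le (by norm_num) (Nat.cast_nonneg m)
  have h := integrableOn_rpow_mul_exp_neg_mul_rpow (s := (m:ℝ)) (p := 1) hm zero_lt_one hv
  simpa [Real.rpow_natCast, Real.rpow_one, neg_mul] using h

lemma integral_pow_mul_exp (m : ℕ) {v : ℝ} (hv : 0 < v) :
    ∫ u in Ioi (0:ℝ), u ^ m * Real.exp (-(v * u)) = (Nat.factorial m : ℝ) / v ^ (m+1) := by
  have h := Real.integral_rpow_mul_exp_neg_mul_Ioi (a := (m:ℝ)+1) (r := v) (by positivity) hv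
  rw [show ((m:ℝ)+1-1) = (m:ℝ) by ring] at h
  have h2 : ∫ t in Ioi (0:ℝ), t ^ (m:ℝ) * Real.exp (-(v*t))
      = ∫ t in Ioi (0:ℝ), t ^ m * Real.exp (-(v*t)) :=
    setIntegral_congr_fun measurableSet_Ioi fun t ht => by rw [Real.rpow_natCast]
  rw [h2, Real.Gamma_nat_eq_factorial] at h
  rw [h, show ((m:ℝ)+1) = ((m+1 : ℕ):ℝ) by push_cast; ring, Real.rpow_natCast, one_div, inv_pow]
  ring


lemma log_pow_le (β : ℕ) {y : ℝ} (hy : 1 ≤ y) :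
    (Real.log y) ^ β ≤ (2*(β:ℝ)+2) ^ β * y ^ ((2:ℝ)⁻¹) := by
  set ε : ℝ := (2*(β:ℝ)+2)⁻¹ with hεdef
  have hε : 0 < ε := by positivity
  have hy0 : (0:ℝ) ≤ y := by linarith
  have h1 : Real.log y ≤ y ^ ε / ε := Real.log_le_rpow_div hy0 hε
  have hl : 0 ≤ Real.log y := Real.log_nonneg hy
  have h2 : (Real.log y) ^ β ≤ (y ^ ε / ε) ^ β := pow_le_pow_left₀ hl h1 β
  have h3 : (y ^ ε / ε) ^ β = (2*(β:ℝ)+2) ^ β * (y ^ ε) ^ β := by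
    rw [div_pow, hεdef, inv_pow]
    field_simp
  have h4 : (y ^ ε) ^ β = y ^ (ε * (β:ℝ)) := by
    rw [← Real.rpow_natCast (y ^ ε) β, ← Real.rpow_mul hy0]
  have h5 : ε * (β:ℝ) ≤ (2:ℝ)⁻¹ := by
    rw [hεdef, inv_mul_le_iff₀ (by positivity)]
    linarith
  have h6 : y ^ (ε * (β:ℝ)) ≤ y ^ ((2:ℝ)⁻¹) := Real.rpow_le_rpow_of_exponent_le hy h5
  calc (Real.log y) ^ β ≤ (y ^ ε / ε) ^ β := h2
    _ = (2*(β:ℝ)+2) ^ β * (y ^ ε) ^ β := h3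
    _ ≤ (2*(β:ℝ)+2) ^ β * y ^ ((2:ℝ)⁻¹) := by
        rw [h4]; exact mul_le_mul_of_nonneg_left h6 (by positivity)

lemma inner_ptwise_A (α : ℕ) (v u : ℝ) :
    Real.exp (-u * v) * |R α (u ^ 2)|
      ≤ (Nat.factorial (α+1) : ℝ)⁻¹ * (u ^ (2*α+2) * Real.exp (-(v * u))) := by
  have hR := R_boundA α (sq_nonneg u)
  have he : (0:ℝ) < Real.exp (-u * v) := Real.exp_pos _
  calc Real.exp (-u * v) * |R α (u ^ 2)|
      ≤ Real.exp (-u * v) * ((u ^ 2) ^ (α+1) / (Nat.factorial (α+1) : ℝ)) :=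
        mul_le_mul_of_nonneg_left hR he.le
    _ = (Nat.factorial (α+1) : ℝ)⁻¹ * (u ^ (2*α+2) * Real.exp (-(v * u))) := by
        rw [← pow_mul, show 2*(α+1) = 2*α+2 by ring, show -u * v = -(v * u) by ring]
        ring

lemma inner_ptwise_B (α : ℕ) (v u : ℝ) :
    Real.exp (-u * v) * |R α (u ^ 2)|
      ≤ ((α:ℝ)+2) * (u ^ 0 * Real.exp (-(v * u))) + ((α:ℝ)+2) * (u ^ (2*α) * Real.exp (-(v * u))) := by
  have hR := R_boundB α (sq_nonneg u)
  have he : (0:ℝ) < Real.exp (-u * v) := Real.exp_pos _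
  calc Real.exp (-u * v) * |R α (u ^ 2)|
      ≤ Real.exp (-u * v) * (((α:ℝ)+2) * (1 + (u ^ 2) ^ α)) :=
        mul_le_mul_of_nonneg_left (by exact_mod_cast hR) he.le
    _ = _ := by
        rw [← pow_mul, show -u * v = -(v * u) by ring]
        ring

lemma integrableOn_inner (α : ℕ) {v : ℝ} (hv : 0 < v) :
    IntegrableOn (fun u : ℝ => Real.exp (-u * v) * |R α (u ^ 2)|) (Ioi 0) := by
  refine Integrable.mono' ((integrableOn_pow_mul_exp (2*α+2) hv).const_mul
      ((Nat.factorial (α+1) : ℝ))⁻¹) ?_ (ae_of_all _ fun u => ?_)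
  · exact ((Real.continuous_exp.comp (continuous_id.neg.mul continuous_const)).mul
      ((continuous_R α).comp (continuous_pow 2)).abs).aestronglyMeasurable
  · rw [Real.norm_eq_abs, abs_mul, abs_of_pos (Real.exp_pos _), abs_abs]
    exact inner_ptwise_A α v u

lemma G_le_A (α : ℕ) {v : ℝ} (hv : 0 < v) :
    ∫ u in Ioi (0:ℝ), Real.exp (-u * v) * |R α (u ^ 2)|
      ≤ (Nat.factorial (2*α+2) : ℝ) / (Nat.factorial (α+1) : ℝ) / v ^ (2*α+3) := by
  have h := setIntegral_mono_on (integrableOn_inner α hv)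
      ((integrableOn_pow_mul_exp (2*α+2) hv).const_mul ((Nat.factorial (α+1) : ℝ))⁻¹)
      measurableSet_Ioi (fun u _ => inner_ptwise_A α v u)
  rw [MeasureTheory.integral_const_mul, integral_pow_mul_exp _ hv] at h
  refine h.trans (le_of_eq ?_)
  rw [show 2*α+2+1 = 2*α+3 by ring]
  ring

lemma G_le_B (α : ℕ) {v : ℝ} (hv : 0 < v) :
    ∫ u in Ioi (0:ℝ), Real.exp (-u * v) * |R α (u ^ 2)|
      ≤ ((α:ℝ)+2) * (1/v + (Nat.factorial (2*α) : ℝ) / v ^ (2*α+1)) := by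
  have hi0 := (integrableOn_pow_mul_exp 0 hv).const_mul ((α:ℝ)+2)
  have hi1 := (integrableOn_pow_mul_exp (2*α) hv).const_mul ((α:ℝ)+2)
  have h := setIntegral_mono_on (integrableOn_inner α hv) (hi0.add hi1)
      measurableSet_Ioi (fun u _ => inner_ptwise_B α v u)
  simp only [Pi.add_apply] at h
  rw [integral_add hi0 hi1, MeasureTheory.integral_const_mul, MeasureTheory.integral_const_mul,
    integral_pow_mul_exp 0 hv, integral_pow_mul_exp (2*α) hv] at h
  refine h.trans (le_of_eq ?_)
  simp [Nat.factorial_zero]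
  ring

theorem integrable_double (α β : ℕ) :
    IntegrableOn
      (fun vu : ℝ × ℝ =>
        vu.1 ^ (2 * α + 1) * Real.log (1 / vu.1) ^ β * Real.exp (-vu.2 * vu.1) * |R α (vu.2 ^ 2)|)
      (Ioi (0 : ℝ) ×ˢ Ioi (0 : ℝ)) := by
  have hRm : Measurable (R α) := (continuous_R α).measurable
  set f : ℝ × ℝ → ℝ := fun vu =>
    vu.1 ^ (2 * α + 1) * Real.log (1 / vu.1) ^ β * Real.exp (-vu.2 * vu.1) * |R α (vu.2 ^ 2)|
    with hfdef
  have hfm : Measurable f := by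
    apply Measurable.mul
    apply Measurable.mul
    apply Measurable.mul
    · exact measurable_fst.pow_const _
    · exact (Real.measurable_log.comp (measurable_const.div measurable_fst)).pow_const _
    · exact Real.measurable_exp.comp (measurable_snd.neg.mul measurable_fst)
    · exact (hRm.comp (measurable_snd.pow_const 2)).abs
  rw [IntegrableOn, Measure.volume_eq_prod, ← Measure.prod_restrict]
  have hae : AEStronglyMeasurable f
      ((volume.restrict (Ioi (0:ℝ))).prod (volume.restrict (Ioi (0:ℝ)))) :=
    hfm.aestronglyMeasurable
  rw [MeasureTheory.integrable_prod_iff hae]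
  constructor
  · filter_upwards [ae_restrict_mem measurableSet_Ioi] with v hv
    have base := integrableOn_inner α (hv : (0:ℝ) < v)
    have h2 : Integrable (fun u => (v ^ (2*α+1) * Real.log (1/v) ^ β) *
        (Real.exp (-u * v) * |R α (u ^ 2)|)) (volume.restrict (Ioi 0)) := base.const_mul _
    simpa [hfdef, mul_assoc] using h2
  · have hFnn : ∀ v : ℝ, 0 ≤ ∫ u, ‖f (v, u)‖ ∂(volume.restrict (Ioi 0)) :=
      fun v => integral_nonneg fun u => norm_nonneg _
    have hFmeas : AEStronglyMeasurable (fun v => ∫ u, ‖f (v, u)‖ ∂(volume.restrict (Ioi 0)))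
        (volume.restrict (Ioi (0:ℝ))) := hae.norm.integral_prod_right'
    have hFval : ∀ v : ℝ, 0 < v → (∫ u, ‖f (v, u)‖ ∂(volume.restrict (Ioi 0)))
        = v ^ (2*α+1) * |Real.log (1/v)| ^ β
            * ∫ u in Ioi (0:ℝ), Real.exp (-u * v) * |R α (u ^ 2)| := by
      intro v hv
      rw [← MeasureTheory.integral_const_mul]
      refine integral_congr_ae (ae_of_all _ fun u => ?_)
      simp only [hfdef]
      rw [Real.norm_eq_abs, abs_mul, abs_mul, abs_mul, abs_abs,
        abs_of_pos (Real.exp_pos _), abs_pow, abs_pow, abs_of_pos hv]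
      ring
    have key1 : IntegrableOn (fun v => ∫ u, ‖f (v, u)‖ ∂(volume.restrict (Ioi 0)))
        (Ioc (0:ℝ) 1) := by
      refine Integrable.mono' (g := fun v : ℝ =>
          (((α:ℝ)+2) * (1 + (Nat.factorial (2*α) : ℝ)) * (2*(β:ℝ)+2)^β) * v ^ (-(2:ℝ)⁻¹))
          ?_ ?_ ?_
      · exact ((intervalIntegrable_iff_integrableOn_Ioc_of_le zero_le_one).1
          (intervalIntegral.intervalIntegrable_rpow' (by norm_num : (-1:ℝ) < -(2:ℝ)⁻¹))).const_mul _
      · exact hFmeas.mono_measure (Measure.restrict_mono Ioc_subset_Ioi_self le_rfl)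
      · filter_upwards [ae_restrict_mem measurableSet_Ioc] with v hv
        obtain ⟨hv0, hv1⟩ := hv
        rw [Real.norm_eq_abs, abs_of_nonneg (hFnn v), hFval v hv0]
        have h1v : (1:ℝ) ≤ 1/v := one_le_one_div hv0 hv1
        have hlog : |Real.log (1/v)| ^ β ≤ (2*(β:ℝ)+2)^β * v ^ (-(2:ℝ)⁻¹) := by
          rw [abs_of_nonneg (Real.log_nonneg h1v)]
          refine (log_pow_le β h1v).trans (le_of_eq ?_)
          rw [one_div, Real.inv_rpow hv0.le, ← Real.rpow_neg hv0.le]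
        calc v ^ (2*α+1) * |Real.log (1/v)| ^ β
              * ∫ u in Ioi (0:ℝ), Real.exp (-u * v) * |R α (u ^ 2)|
            ≤ v ^ (2*α+1) * |Real.log (1/v)| ^ β
              * (((α:ℝ)+2) * (1/v + (Nat.factorial (2*α) : ℝ) / v ^ (2*α+1))) :=
              mul_le_mul_of_nonneg_left (G_le_B α hv0) (by positivity)
          _ = |Real.log (1/v)| ^ β * (((α:ℝ)+2) * (v ^ (2*α) + (Nat.factorial (2*α) : ℝ))) := by
              have hvne : v ≠ 0 := hv0.ne'
              field_simp
              ring
          _ ≤ ((2*(β:ℝ)+2)^β * v ^ (-(2:ℝ)⁻¹))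
              * (((α:ℝ)+2) * (1 + (Nat.factorial (2*α) : ℝ))) := by
              refine mul_le_mul hlog ?_ (by positivity) (by positivity)
              exact mul_le_mul_of_nonneg_left
                (add_le_add (pow_le_one₀ hv0.le hv1) le_rfl) (by positivity)
          _ = (((α:ℝ)+2) * (1 + (Nat.factorial (2*α) : ℝ)) * (2*(β:ℝ)+2)^β)
              * v ^ (-(2:ℝ)⁻¹) := by ring
    have key2 : IntegrableOn (fun v => ∫ u, ‖f (v, u)‖ ∂(volume.restrict (Ioi 0)))
        (Ioi (1:ℝ)) := by
      refine Integrable.mono' (g := fun v : ℝ =>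
          ((Nat.factorial (2*α+2) : ℝ) / (Nat.factorial (α+1) : ℝ) * (2*(β:ℝ)+2)^β)
            * v ^ (-(3/2) : ℝ)) ?_ ?_ ?_
      · exact (integrableOn_Ioi_rpow_of_lt (by norm_num) one_pos).const_mul _
      · exact hFmeas.mono_measure (Measure.restrict_mono (Ioi_subset_Ioi zero_le_one) le_rfl)
      · filter_upwards [ae_restrict_mem measurableSet_Ioi] with v hv
        have hv1 : (1:ℝ) < v := hv
        have hv0 : (0:ℝ) < v := zero_lt_one.trans hv1
        rw [Real.norm_eq_abs, abs_of_nonneg (hFnn v), hFval v hv0]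
        have hlog : |Real.log (1/v)| ^ β ≤ (2*(β:ℝ)+2)^β * v ^ ((2:ℝ)⁻¹) := by
          rw [one_div, Real.log_inv, abs_neg, abs_of_nonneg (Real.log_nonneg hv1.le)]
          exact log_pow_le β hv1.le
        calc v ^ (2*α+1) * |Real.log (1/v)| ^ β
              * ∫ u in Ioi (0:ℝ), Real.exp (-u * v) * |R α (u ^ 2)|
            ≤ v ^ (2*α+1) * |Real.log (1/v)| ^ β
              * ((Nat.factorial (2*α+2) : ℝ) / (Nat.factorial (α+1) : ℝ) / v ^ (2*α+3)) :=
              mul_le_mul_of_nonneg_left (G_le_A α hv0) (by positivity)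
          _ = |Real.log (1/v)| ^ β * ((Nat.factorial (2*α+2) : ℝ) / (Nat.factorial (α+1) : ℝ))
              * (v ^ 2)⁻¹ := by
              have hvne : v ≠ 0 := hv0.ne'
              rw [show 2*α+3 = (2*α+1)+2 by ring, pow_add]
              field_simp
              ring
          _ ≤ ((2*(β:ℝ)+2)^β * v ^ ((2:ℝ)⁻¹))
              * ((Nat.factorial (2*α+2) : ℝ) / (Nat.factorial (α+1) : ℝ)) * (v ^ 2)⁻¹ := by
              refine mul_le_mul_of_nonneg_right
                (mul_le_mul_of_nonneg_right hlog (by positivity)) (by positivity)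
          _ = ((Nat.factorial (2*α+2) : ℝ) / (Nat.factorial (α+1) : ℝ) * (2*(β:ℝ)+2)^β)
              * (v ^ ((2:ℝ)⁻¹) / v ^ (2:ℕ)) := by ring
          _ = ((Nat.factorial (2*α+2) : ℝ) / (Nat.factorial (α+1) : ℝ) * (2*(β:ℝ)+2)^β)
              * v ^ (-(3/2) : ℝ) := by
              congr 1
              rw [← Real.rpow_natCast v 2, ← Real.rpow_sub hv0]
              norm_num
    exact (key1.union key2).mono_set (Ioc_union_Ioi_eq_Ioi zero_le_one).symm.subset
end
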